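/- arXiv:2504.05929 — 4 statements merged into one kernel-verified Lean document; each statement's English description precedes it below -/
import Mathlib

section
/- Let L be a restricted Lie algebra in characteristic 2, M a restricted L-module, n ≥ 2, and (φ,ω) an n-cochain of the restricted cohomology. Then the pair (d^n_{CE}(φ), δ^n(ω)) is an (n+1)-cochain; in particular δ^n ω(x+y, z_2,...,z_n) = δ^n ω(x, z_2,...,z_n) + δ^n ω(y, z_2,...,z_n) + d^n_{CE} φ(x, y, z_2,...,z_n) for all x,y,z_i in L. -/
/-- Reindexing map deleting slot `i`: `v ∘ hdel i` is the tuple `v` with its `i`-th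
entry removed. -/
def hdel (i : ℕ) : ℕ → ℕ := fun k => if k < i then k else k + 1

/-- Prepend an element to a tuple. -/
def hprep {L : Type*} (a : L) (v : ℕ → L) : ℕ → L :=
  fun k => if k = 0 then a else v (k - 1)

/-- Chevalley–Eilenberg differential of an `n`-cochain (characteristic 2, so no signs);
cochains of arity `n` are encoded as functions of sequences depending on slots `< n`. -/
def dCE2 {L M : Type*} [LieRing L] [AddCommGroup M] [LieRingModule L M]
    (n : ℕ) (φ : (ℕ → L) → M) : (ℕ → L) → M :=
  fun v =>
    (∑ i ∈ Finset.range (n + 1), ⁅v i, φ (v ∘ hdel i)⁆) +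
      ∑ i ∈ Finset.range (n + 1), ∑ j ∈ Finset.range (n + 1),
        if i < j then φ (hprep ⁅v i, v j⁆ (v ∘ hdel j ∘ hdel i)) else 0

/-- The restricted differential `δ^n` on the `ω`-part of a restricted `n`-cochain
`(φ, ω)` in characteristic 2; the sequence `z` encodes the variables `z_2, …, z_n`
(so `n - 1` relevant slots). -/
def delta2 {L M : Type*} [LieRing L] [AddCommGroup M] [LieRingModule L M]
    (sq : L → L) (n : ℕ) (φ : (ℕ → L) → M) (ω : L → (ℕ → L) → M) :
    L → (ℕ → L) → M :=
  fun x z =>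
    ⁅x, φ (hprep x z)⁆ +
    (∑ i ∈ Finset.range (n - 1), ⁅z i, ω x (z ∘ hdel i)⁆) +
    φ (hprep (sq x) z) +
    (∑ i ∈ Finset.range (n - 1), φ (hprep ⁅x, z i⁆ (hprep x (z ∘ hdel i)))) +
    ∑ i ∈ Finset.range (n - 1), ∑ j ∈ Finset.range (n - 1),
      if i < j then ω x (hprep ⁅z i, z j⁆ (z ∘ hdel j ∘ hdel i)) else 0

/-- `(φ, ω)` is a restricted `n`-cochain (characteristic 2): `φ` is an alternating
multilinear `n`-cochain, `ω(x, z_2, …, z_{n-1})` is quadratic in `x`, alternating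
multilinear in the `z`'s, and `ω(x+y, z) = ω(x, z) + ω(y, z) + φ(x, y, z)`. -/
def IsRestrictedCochain2 (F : Type*) {L M : Type*} [Field F] [LieRing L] [LieAlgebra F L]
    [AddCommGroup M] [Module F M] [LieRingModule L M]
    (n : ℕ) (φ : (ℕ → L) → M) (ω : L → (ℕ → L) → M) : Prop :=
  (∀ (v : ℕ → L) (i : ℕ) (a b : L), i < n →
      φ (Function.update v i (a + b)) = φ (Function.update v i a) + φ (Function.update v i b)) ∧
  (∀ (v : ℕ → L) (i : ℕ) (c : F) (a : L), i < n →
      φ (Function.update v i (c • a)) = c • φ (Function.update v i a)) ∧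
  (∀ (v : ℕ → L) (i j : ℕ), i < n → j < n → i ≠ j → v i = v j → φ v = 0) ∧
  (∀ (c : F) (x : L) (z : ℕ → L), ω (c • x) z = c ^ 2 • ω x z) ∧
  (∀ (x : L) (z : ℕ → L) (i : ℕ) (a b : L), i < n - 2 →
      ω x (Function.update z i (a + b)) = ω x (Function.update z i a) + ω x (Function.update z i b)) ∧
  (∀ (x : L) (z : ℕ → L) (i : ℕ) (c : F) (a : L), i < n - 2 →
      ω x (Function.update z i (c • a)) = c • ω x (Function.update z i a)) ∧
  (∀ (x : L) (z : ℕ → L) (i j : ℕ), i < n - 2 → j < n - 2 → i ≠ j → z i = z j → ω x z = 0) ∧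
  (∀ (x y : L) (z : ℕ → L), ω (x + y) z = ω x z + ω y z + φ (hprep x (hprep y z)))


section Idx
variable {L : Type*} (v : ℕ → L)

lemma hdel_ne (i k : ℕ) : hdel i k ≠ i := by simp [hdel]; split_ifs <;> omega

lemma comp_hdel_apply (i k : ℕ) : (v ∘ hdel i) k = if k < i then v k else v (k + 1) := by
  simp only [Function.comp_apply, hdel]; split_ifs <;> rfl

lemma hdel_comp (i j : ℕ) (h : i ≤ j) : hdel (j + 1) ∘ hdel i = hdel i ∘ hdel j := by
  funext k; simp only [Function.comp_apply, hdel]; split_ifs <;> omega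

lemma update_comp_hdel_self (i : ℕ) (a : L) :
    (Function.update v i a) ∘ hdel i = v ∘ hdel i := by
  funext t; simp only [Function.comp_apply, Function.update_apply, hdel]
  split_ifs <;> first | rfl | (exfalso; first | omega | assumption)

lemma update_comp_hdel (i k : ℕ) (a : L) (h : k ≠ i) :
    (Function.update v k a) ∘ hdel i =
      Function.update (v ∘ hdel i) (if k < i then k else k - 1) a := by
  funext t; simp only [Function.comp_apply, Function.update_apply, hdel]
  split_ifs <;> first | rfl | (exfalso; first | omega | assumption)

lemma update_comp_hdel2 (k l p : ℕ) (a : L) (hkl : k < l) (hpk : p ≠ k) (hpl : p ≠ l) :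
    (Function.update v p a) ∘ hdel l ∘ hdel k =
      Function.update (v ∘ hdel l ∘ hdel k)
        (if p < k then p else if p < l then p - 1 else p - 2) a := by
  funext t; simp only [Function.comp_apply, Function.update_apply, hdel]
  split_ifs <;> first | rfl | (exfalso; first | omega | assumption)

lemma update_comp_hdel2_self_left (k l : ℕ) (a : L) (hkl : k < l) :
    (Function.update v k a) ∘ hdel l ∘ hdel k = v ∘ hdel l ∘ hdel k := by
  funext t; simp only [Function.comp_apply, Function.update_apply, hdel]
  split_ifs <;> first | rfl | (exfalso; first | omega | assumption)

lemma update_comp_hdel2_self_right (k l : ℕ) (a : L) (hkl : k < l) :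
    (Function.update v l a) ∘ hdel l ∘ hdel k = v ∘ hdel l ∘ hdel k := by
  funext t; simp only [Function.comp_apply, Function.update_apply, hdel]
  split_ifs <;> first | rfl | (exfalso; first | omega | assumption)

lemma comp_hdel2_apply (k l t : ℕ) (hkl : k < l) (htk : t ≠ k) (htl : t ≠ l) :
    (v ∘ hdel l ∘ hdel k) (if t < k then t else if t < l then t - 1 else t - 2) = v t := by
  simp only [Function.comp_apply, hdel]
  split_ifs <;> first | rfl | (exfalso; first | omega | assumption) | (congr 1; omega)

lemma comp_hdel_pos (i k : ℕ) (h : i ≠ k) :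
    (v ∘ hdel k) (if i < k then i else i - 1) = v i := by
  simp only [Function.comp_apply, hdel]
  split_ifs <;> first | rfl | (exfalso; first | omega | assumption) | (congr 1; omega)

lemma comp_comp (i j : ℕ) : v ∘ hdel j ∘ hdel i = (v ∘ hdel j) ∘ hdel i := rfl

lemma hprep_zero (a : L) : hprep a v 0 = a := rfl

lemma hprep_succ (a : L) (k : ℕ) : hprep a v (k + 1) = v k := rfl

lemma hprep_comp_hdel_zero (a : L) : hprep a v ∘ hdel 0 = v := by
  funext k; simp [hprep, hdel]

lemma hprep_comp_hdel_succ (a : L) (i : ℕ) :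
    hprep a v ∘ hdel (i + 1) = hprep a (v ∘ hdel i) := by
  funext k; simp only [Function.comp_apply, hprep, hdel]
  split_ifs <;> first | rfl | (exfalso; first | omega | assumption) | (congr 1; omega)

lemma hprep_update (a b : L) (k : ℕ) :
    hprep a (Function.update v k b) = Function.update (hprep a v) (k + 1) b := by
  funext t; simp only [hprep, Function.update_apply]
  split_ifs <;> first | rfl | (exfalso; first | omega | assumption) | (congr 1; omega)

lemma update_hprep_zero (a b : L) : Function.update (hprep a v) 0 b = hprep b v := by
  funext t; simp only [hprep, Function.update_apply]
  split_ifs <;> first | rfl | (exfalso; first | omega | assumption)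

end Idx

section Alg
variable {F L M : Type*} [Field F] [CharP F 2]
    [LieRing L] [LieAlgebra F L]
    [AddCommGroup M] [Module F M] [LieRingModule L M] [LieModule F L M]

lemma char2_add_self (F : Type*) {M : Type*} [Field F] [CharP F 2] [AddCommGroup M]
    [Module F M] (m : M) : m + m = 0 := by
  have : (2 : F) • m = 0 := by
    have : (2 : F) = 0 := by exact_mod_cast CharP.cast_eq_zero F 2
    rw [this, zero_smul]
  rwa [two_smul] at this

lemma char2_eq_of_add_eq_zero (F : Type*) {M : Type*} [Field F] [CharP F 2] [AddCommGroup M]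
    [Module F M] {a b : M} (h : a + b = 0) : a = b := by
  have h2 := char2_add_self F b
  have : a + b + b = b := by rw [h]; abel
  rwa [add_assoc, h2, add_zero] at this

lemma lie_symm' (F : Type*) {L : Type*} [Field F] [CharP F 2] [LieRing L] [LieAlgebra F L]
    (a b : L) : ⁅a, b⁆ = ⁅b, a⁆ := by
  apply char2_eq_of_add_eq_zero F
  rw [add_eq_zero_iff_eq_neg]
  exact (lie_skew a b).symm

/-- additivity in each slot `< N` -/
def Addl (g : (ℕ → L) → M) (N : ℕ) : Prop :=
  ∀ (v : ℕ → L) (i : ℕ) (a b : L), i < N →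
    g (Function.update v i (a + b)) = g (Function.update v i a) + g (Function.update v i b)

/-- alternating on slots `< N` -/
def Altl (g : (ℕ → L) → M) (N : ℕ) : Prop :=
  ∀ (v : ℕ → L) (i j : ℕ), i < N → j < N → i ≠ j → v i = v j → g v = 0

lemma Addl.zero_slot (F : Type*) [Field F] [CharP F 2] [Module F M]
    {g : (ℕ → L) → M} {N : ℕ} (hg : Addl g N) (v : ℕ → L) {i : ℕ}
    (hi : i < N) : g (Function.update v i 0) = 0 := by
  have := hg v i 0 0 hi
  rw [add_zero] at this
  have h2 := char2_add_self F (g (Function.update v i 0))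
  -- this : g (upd 0) = g (upd 0) + g (upd 0)
  rw [h2] at this; exact this

lemma swap_eq (F : Type*) [Field F] [CharP F 2] [Module F M] {g : (ℕ → L) → M} {N : ℕ} (hadd : Addl g N) (halt : Altl g N)
    (v : ℕ → L) {i j : ℕ} (hi : i < N) (hj : j < N) (hij : i ≠ j) :
    g (Function.update (Function.update v i (v j)) j (v i)) = g v := by
  apply char2_eq_of_add_eq_zero F
  set a := v i with ha
  set b := v j with hb
  have hw : g (Function.update (Function.update v i (a + b)) j (a + b)) = 0 := by
    apply halt _ i j hi hj hij
    rw [Function.update_apply, Function.update_apply]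
    simp [hij, Ne.symm hij]
  have exp1 : g (Function.update (Function.update v i (a + b)) j (a + b)) =
      g (Function.update (Function.update v i a) j (a + b)) +
      g (Function.update (Function.update v i b) j (a + b)) := by
    rw [Function.update_comm hij (a + b) (a + b) v, hadd _ i a b hi,
      ← Function.update_comm hij a (a + b) v, ← Function.update_comm hij b (a + b) v]
  have exp2 : ∀ c : L, g (Function.update (Function.update v i c) j (a + b)) =
      g (Function.update (Function.update v i c) j a) +
      g (Function.update (Function.update v i c) j b) := fun c => hadd _ j a b hj
  rw [exp1, exp2, exp2] at hw
  have z1 : g (Function.update (Function.update v i a) j a) = 0 := by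
    apply halt _ i j hi hj hij
    simp [Function.update_apply, hij, Ne.symm hij]
  have z2 : g (Function.update (Function.update v i b) j b) = 0 := by
    apply halt _ i j hi hj hij
    simp [Function.update_apply, hij, Ne.symm hij]
  have e3 : Function.update (Function.update v i a) j b = v := by
    rw [ha, Function.update_eq_self, hb, Function.update_eq_self]
  rw [z1, e3, z2] at hw
  rw [zero_add, add_zero, add_comm] at hw
  exact hw

lemma gen_del_aux (F : Type*) [Field F] [CharP F 2] [Module F M] {g : (ℕ → L) → M} {N : ℕ} (hadd : Addl g N) (halt : Altl g N) :
    ∀ (d i : ℕ) (z : ℕ → L), i + d + 1 ≤ N → z i = z (i + d + 1) →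
      g (z ∘ hdel i) = g (z ∘ hdel (i + d + 1)) := by
  intro d
  induction d with
  | zero =>
    intro i z hN hz
    have hz' : z (i + 1) = z i := by
      have : i + 0 + 1 = i + 1 := by omega
      rw [this] at hz; exact hz.symm
    congr 1
    funext k
    simp only [Function.comp_apply, hdel]
    rcases lt_trichotomy k i with h | h | h
    · rw [if_pos h, if_pos (by omega)]
    · subst h; rw [if_neg (by omega), if_pos (by omega)]; exact hz'
    · rw [if_neg (by omega), if_neg (by omega)]
  | succ d ih =>
    intro i z hN hz
    set z₂ := Function.update (Function.update z i (z (i+1))) (i+1) (z i) with hz₂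
    have step1 : z ∘ hdel i = z₂ ∘ hdel (i + 1) := by
      funext k
      simp only [hz₂, Function.comp_apply, hdel, Function.update_apply]
      split_ifs <;> first | rfl | (exfalso; omega) | (congr 1; omega)
    have hz2 : z₂ (i+1) = z₂ ((i+1) + d + 1) := by
      have h1 : z₂ (i+1) = z i := by simp [hz₂]
      have h2 : z₂ (i + 1 + d + 1) = z (i + 1 + d + 1) := by
        simp only [hz₂, Function.update_apply]
        rw [if_neg (by omega), if_neg (by omega)]
      rw [h1, h2]
      have e : i + 1 + d + 1 = i + (d + 1) + 1 := by omega
      rw [e]; exact hz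
    have step2 : g (z₂ ∘ hdel (i+1)) = g (z₂ ∘ hdel (i + 1 + d + 1)) :=
      ih (i+1) z₂ (by omega) hz2
    have step3 : z₂ ∘ hdel (i + 1 + d + 1) =
        Function.update (Function.update (z ∘ hdel (i + 1 + d + 1)) i
          ((z ∘ hdel (i + 1 + d + 1)) (i+1))) (i+1) ((z ∘ hdel (i + 1 + d + 1)) i) := by
      funext k
      simp only [hz₂, Function.comp_apply, hdel, Function.update_apply]
      split_ifs <;> first | rfl | (exfalso; omega) | (congr 1; omega)
    have step4 : g (z₂ ∘ hdel (i + 1 + d + 1)) = g (z ∘ hdel (i + 1 + d + 1)) := by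
      rw [step3]
      exact swap_eq F hadd halt _ (by omega) (by omega) (by omega)
    have e : i + 1 + d + 1 = i + (d + 1) + 1 := by omega
    rw [step1, step2, step4, e]

lemma gen_del (F : Type*) [Field F] [CharP F 2] [Module F M] {g : (ℕ → L) → M} {N : ℕ} (hadd : Addl g N) (halt : Altl g N)
    {z : ℕ → L} {i j : ℕ} (hij : i < j) (hj : j ≤ N) (hz : z i = z j) :
    g (z ∘ hdel i) = g (z ∘ hdel j) := by
  have h : j = i + (j - i - 1) + 1 := by omega
  rw [h] at hz ⊢
  exact gen_del_aux F hadd halt _ i z (by omega) hz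

end Alg

section Sums
variable {L M : Type*}
    [LieRing L]
    [AddCommGroup M] [LieRingModule L M]

lemma single_sum_vanish (F : Type*) [Field F] [CharP F 2] [Module F M]
    {g : L → (ℕ → L) → M} {N R : ℕ} (hR : R ≤ N + 1)
    (hadd : ∀ a, Addl (g a) N) (halt : ∀ a, Altl (g a) N)
    {z : ℕ → L} {i j : ℕ} (hij : i < j) (hj : j < R) (hz : z i = z j) :
    ∑ k ∈ Finset.range R, g (z k) (z ∘ hdel k) = 0 := by
  have hsub : ({i, j} : Finset ℕ) ⊆ Finset.range R := by
    intro t ht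
    simp only [Finset.mem_insert, Finset.mem_singleton] at ht
    rcases ht with rfl | rfl <;> simp only [Finset.mem_range] <;> omega
  have hout : ∀ k ∈ Finset.range R, k ∉ ({i, j} : Finset ℕ) →
      g (z k) (z ∘ hdel k) = 0 := by
    intro k hk hk'
    simp only [Finset.mem_insert, Finset.mem_singleton, not_or] at hk'
    simp only [Finset.mem_range] at hk
    apply halt _ _ (if i < k then i else i - 1) (if j < k then j else j - 1)
    · split_ifs <;> omega
    · split_ifs <;> omega
    · split_ifs <;> omega
    · rw [comp_hdel_pos z i k (by omega), comp_hdel_pos z j k (by omega), hz]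
  rw [← Finset.sum_subset hsub hout, Finset.sum_pair (show i ≠ j by omega)]
  have key : g (z i) (z ∘ hdel i) = g (z j) (z ∘ hdel j) := by
    rw [hz]
    exact gen_del F (hadd _) (halt _) hij (by omega) hz
  rw [key]
  exact char2_add_self F _

lemma single_sum_add {g : L → (ℕ → L) → M} {N R : ℕ} (hR : R ≤ N + 1)
    (g1 : ∀ (u : ℕ → L) (a b : L), g (a + b) u = g a u + g b u)
    (hadd : ∀ a, Addl (g a) N)
    (v : ℕ → L) {p : ℕ} (hp : p < R) (a b : L) :
    ∑ k ∈ Finset.range R,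
        g (Function.update v p (a + b) k) (Function.update v p (a + b) ∘ hdel k)
      = (∑ k ∈ Finset.range R,
          g (Function.update v p a k) (Function.update v p a ∘ hdel k))
        + ∑ k ∈ Finset.range R,
            g (Function.update v p b k) (Function.update v p b ∘ hdel k) := by
  rw [← Finset.sum_add_distrib]
  apply Finset.sum_congr rfl
  intro k hk
  simp only [Finset.mem_range] at hk
  by_cases hkp : k = p
  · subst hkp
    rw [Function.update_self, Function.update_self, Function.update_self,
        update_comp_hdel_self, update_comp_hdel_self, update_comp_hdel_self, g1]
  · rw [Function.update_of_ne hkp, Function.update_of_ne hkp, Function.update_of_ne hkp,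
        update_comp_hdel v k p (a + b) (Ne.symm hkp), update_comp_hdel v k p a (Ne.symm hkp),
        update_comp_hdel v k p b (Ne.symm hkp)]
    exact hadd (v k) _ _ a b (by split_ifs <;> omega)

lemma single_sum_smul (F : Type*) [Field F] [LieAlgebra F L] [Module F M]
    {g : L → (ℕ → L) → M} {N R : ℕ} (hR : R ≤ N + 1)
    (g1 : ∀ (u : ℕ → L) (c : F) (a : L), g (c • a) u = c • g a u)
    (hsml : ∀ (a : L) (v : ℕ → L) (i : ℕ) (c : F) (b : L), i < N →
      g a (Function.update v i (c • b)) = c • g a (Function.update v i b))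
    (v : ℕ → L) {p : ℕ} (hp : p < R) (c : F) (a : L) :
    ∑ k ∈ Finset.range R,
        g (Function.update v p (c • a) k) (Function.update v p (c • a) ∘ hdel k)
      = c • ∑ k ∈ Finset.range R,
          g (Function.update v p a k) (Function.update v p a ∘ hdel k) := by
  rw [Finset.smul_sum]
  apply Finset.sum_congr rfl
  intro k hk
  simp only [Finset.mem_range] at hk
  by_cases hkp : k = p
  · subst hkp
    rw [Function.update_self, Function.update_self,
        update_comp_hdel_self, update_comp_hdel_self, g1]
  · rw [Function.update_of_ne hkp, Function.update_of_ne hkp,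
        update_comp_hdel v k p (c • a) (Ne.symm hkp), update_comp_hdel v k p a (Ne.symm hkp)]
    exact hsml (v k) _ _ c a (by split_ifs <;> omega)

end Sums

def swij (i j t : ℕ) : ℕ := if t = i then j else if t = j then i else t

def pmap (i j : ℕ) (p : ℕ × ℕ) : ℕ × ℕ :=
  if p.1 < p.2 ∧ ¬(p.1 = i ∧ p.2 = j) then
    (min (swij i j p.1) (swij i j p.2), max (swij i j p.1) (swij i j p.2)) else p

set_option maxHeartbeats 1000000 in
lemma pmap_invol (i j : ℕ) (hij : i < j) (p : ℕ × ℕ) : pmap i j (pmap i j p) = p := by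
  rcases p with ⟨k, l⟩
  simp only [pmap, swij, Prod.ext_iff]
  split_ifs <;> simp_all <;> omega

lemma pmap_mem (i j R : ℕ) (hi : i < R) (hj : j < R) (p : ℕ × ℕ)
    (h1 : p.1 < R) (h2 : p.2 < R) : (pmap i j p).1 < R ∧ (pmap i j p).2 < R := by
  rcases p with ⟨k, l⟩
  simp only [pmap, swij]
  split_ifs <;> constructor <;> simp_all <;> omega

lemma pmap_fix (i j : ℕ) (hij : i < j) (p : ℕ × ℕ) (hc : p.1 < p.2 ∧ ¬(p.1 = i ∧ p.2 = j))
    (h : pmap i j p = p) : p.1 ≠ i ∧ p.1 ≠ j ∧ p.2 ≠ i ∧ p.2 ≠ j := by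
  rcases p with ⟨k, l⟩
  simp only [pmap, swij, Prod.ext_iff, if_pos hc] at h
  refine ⟨?_, ?_, ?_, ?_⟩ <;> intro hc2 <;> (split_ifs at h <;> omega)

lemma pmap_eq (i j k l a b : ℕ) (hc : k < l ∧ ¬(k = i ∧ l = j))
    (ha : min (swij i j k) (swij i j l) = a) (hb : max (swij i j k) (swij i j l) = b) :
    pmap i j (k, l) = (a, b) := by simp [pmap, hc, ha, hb]

section DSums
variable {L M : Type*}
    [LieRing L]
    [AddCommGroup M] [LieRingModule L M]

/-- term equality: pairs (m,i) vs (m,j) when m < i < j -/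
lemma pair_caseA (F : Type*) [Field F] [CharP F 2] [Module F M]
    {g : L → (ℕ → L) → M} {N : ℕ}
    (hadd : ∀ a, Addl (g a) N) (halt : ∀ a, Altl (g a) N)
    {z : ℕ → L} {i j m : ℕ} (hmi : m < i) (hij : i < j) (hjN : j ≤ N + 1)
    (hz : z i = z j) :
    g ⁅z m, z i⁆ (z ∘ hdel i ∘ hdel m) = g ⁅z m, z j⁆ (z ∘ hdel j ∘ hdel m) := by
  have e1 : z ∘ hdel i ∘ hdel m = (z ∘ hdel m) ∘ hdel (i - 1) := by
    have h := hdel_comp m (i - 1) (by omega)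
    rw [show i - 1 + 1 = i from by omega] at h
    show z ∘ (hdel i ∘ hdel m) = _
    rw [h]; rfl
  have e2 : z ∘ hdel j ∘ hdel m = (z ∘ hdel m) ∘ hdel (j - 1) := by
    have h := hdel_comp m (j - 1) (by omega)
    rw [show j - 1 + 1 = j from by omega] at h
    show z ∘ (hdel j ∘ hdel m) = _
    rw [h]; rfl
  rw [e1, e2, hz]
  apply gen_del F (hadd _) (halt _) (show i - 1 < j - 1 by omega) (by omega)
  show z (hdel m (i - 1)) = z (hdel m (j - 1))
  rw [show hdel m (i - 1) = i from by simp only [hdel]; rw [if_neg (by omega)]; omega,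
      show hdel m (j - 1) = j from by simp only [hdel]; rw [if_neg (by omega)]; omega]
  exact hz

/-- term equality: pairs (i,m) vs (m,j) when i < m < j -/
lemma pair_caseB (F : Type*) [Field F] [CharP F 2] [LieAlgebra F L] [Module F M]
    {g : L → (ℕ → L) → M} {N : ℕ}
    (hadd : ∀ a, Addl (g a) N) (halt : ∀ a, Altl (g a) N)
    {z : ℕ → L} {i j m : ℕ} (him : i < m) (hmj : m < j) (hjN : j ≤ N + 1)
    (hz : z i = z j) :
    g ⁅z i, z m⁆ (z ∘ hdel m ∘ hdel i) = g ⁅z m, z j⁆ (z ∘ hdel j ∘ hdel m) := by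
  have e2 : z ∘ hdel j ∘ hdel m = (z ∘ hdel m) ∘ hdel (j - 1) := by
    have h := hdel_comp m (j - 1) (by omega)
    rw [show j - 1 + 1 = j from by omega] at h
    show z ∘ (hdel j ∘ hdel m) = _
    rw [h]; rfl
  rw [e2, ← hz, lie_symm' F (z m) (z i)]
  show g ⁅z i, z m⁆ ((z ∘ hdel m) ∘ hdel i) = g ⁅z i, z m⁆ ((z ∘ hdel m) ∘ hdel (j - 1))
  apply gen_del F (hadd _) (halt _) (show i < j - 1 by omega) (by omega)
  show z (hdel m i) = z (hdel m (j - 1))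
  rw [show hdel m i = i from by simp only [hdel]; rw [if_pos (by omega)],
      show hdel m (j - 1) = j from by simp only [hdel]; rw [if_neg (by omega)]; omega]
  exact hz

/-- term equality: pairs (i,m) vs (j,m) when i < j < m -/
lemma pair_caseC (F : Type*) [Field F] [CharP F 2] [Module F M]
    {g : L → (ℕ → L) → M} {N : ℕ}
    (hadd : ∀ a, Addl (g a) N) (halt : ∀ a, Altl (g a) N)
    {z : ℕ → L} {i j m : ℕ} (hij : i < j) (hjm : j < m) (hjN : j ≤ N)
    (hz : z i = z j) :
    g ⁅z i, z m⁆ (z ∘ hdel m ∘ hdel i) = g ⁅z j, z m⁆ (z ∘ hdel m ∘ hdel j) := by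
  rw [hz]
  show g ⁅z j, z m⁆ ((z ∘ hdel m) ∘ hdel i) = g ⁅z j, z m⁆ ((z ∘ hdel m) ∘ hdel j)
  apply gen_del F (hadd _) (halt _) hij hjN
  show z (hdel m i) = z (hdel m j)
  rw [show hdel m i = i from by simp only [hdel]; rw [if_pos (by omega)],
      show hdel m j = j from by simp only [hdel]; rw [if_pos (by omega)]]
  exact hz

lemma pair_disj {g : L → (ℕ → L) → M} {N : ℕ}
    (halt : ∀ a, Altl (g a) N)
    {z : ℕ → L} {i j : ℕ} (hij : i < j)
    {k l R : ℕ} (hR : R ≤ N + 2) (hjR : j < R) (hkl : k < l) (hlR : l < R)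
    (hki : k ≠ i) (hkj : k ≠ j) (hli : l ≠ i) (hlj : l ≠ j)
    (hz : z i = z j) (b : L) :
    g b (z ∘ hdel l ∘ hdel k) = 0 := by
  apply halt _ _ (if i < k then i else if i < l then i - 1 else i - 2)
    (if j < k then j else if j < l then j - 1 else j - 2)
  · split_ifs <;> omega
  · split_ifs <;> omega
  · split_ifs <;> omega
  · rw [comp_hdel2_apply z k l i hkl (Ne.symm hki) (Ne.symm hli),
        comp_hdel2_apply z k l j hkl (Ne.symm hkj) (Ne.symm hlj), hz]

lemma double_sum_vanish (F : Type*) [Field F] [CharP F 2] [LieAlgebra F L] [Module F M]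
    {g : L → (ℕ → L) → M} {N R : ℕ} (hR : R ≤ N + 2)
    (hzero : 1 < R → ∀ u, g 0 u = 0)
    (hadd : ∀ a, Addl (g a) N) (halt : ∀ a, Altl (g a) N)
    {z : ℕ → L} {i j : ℕ} (hij : i < j) (hj : j < R) (hz : z i = z j) :
    ∑ k ∈ Finset.range R, ∑ l ∈ Finset.range R,
      (if k < l then g ⁅z k, z l⁆ (z ∘ hdel l ∘ hdel k) else 0) = 0 := by
  rw [← Finset.sum_product']
  set f : ℕ × ℕ → M :=
    fun p => if p.1 < p.2 then g ⁅z p.1, z p.2⁆ (z ∘ hdel p.2 ∘ hdel p.1) else 0 with hf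
  have fzero : ∀ p : ℕ × ℕ, p ∈ Finset.range R ×ˢ Finset.range R →
      (¬ (p.1 < p.2) ∨ (p.1 = i ∧ p.2 = j) ∨ (p.1 ≠ i ∧ p.1 ≠ j ∧ p.2 ≠ i ∧ p.2 ≠ j)) →
      f p = 0 := by
    rintro ⟨k, l⟩ hp hcase
    simp only [Finset.mem_product, Finset.mem_range] at hp
    simp only [hf]
    rcases hcase with h | ⟨h1, h2⟩ | ⟨h1, h2, h3, h4⟩
    · rw [if_neg h]
    · simp only at h1 h2
      subst h1; subst h2
      rw [if_pos hij, hz, lie_self]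
      exact hzero (by omega) _
    · simp only at h1 h2 h3 h4
      by_cases hkl : k < l
      · rw [if_pos hkl]
        exact pair_disj halt hij hR hj hkl hp.2 h1 h2 h3 h4 hz _
      · rw [if_neg hkl]
  have hcondzero : ∀ p ∈ Finset.range R ×ˢ Finset.range R,
      ¬ (p.1 < p.2 ∧ ¬(p.1 = i ∧ p.2 = j)) → f p = 0 := by
    intro p hp hcond
    apply fzero p hp
    rcases Decidable.not_and_iff_or_not.mp hcond with h | h
    · left; exact h
    · right; left; exact Decidable.not_not.mp h
  apply Finset.sum_involution (g := fun p _ => pmap i j p)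
  case hg₃ =>
    intro p hp hfp heq
    apply hfp
    by_cases hcond : p.1 < p.2 ∧ ¬ (p.1 = i ∧ p.2 = j)
    · exact fzero p hp (Or.inr (Or.inr (pmap_fix i j hij p hcond heq)))
    · exact hcondzero p hp hcond
  case g_mem =>
    intro p hp
    simp only [Finset.mem_product, Finset.mem_range] at hp ⊢
    exact pmap_mem i j R (by omega) hj p hp.1 hp.2
  case hg₄ =>
    intro p hp
    exact pmap_invol i j hij p
  case hg₁ =>
    intro p hp
    by_cases hcond : p.1 < p.2 ∧ ¬ (p.1 = i ∧ p.2 = j)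
    · have key : f (pmap i j p) = f p := by
        obtain ⟨k, l⟩ := p
        obtain ⟨hkl, hnij⟩ := hcond
        simp only at hkl hnij
        simp only [Finset.mem_product, Finset.mem_range] at hp
        by_cases hd : k ≠ i ∧ k ≠ j ∧ l ≠ i ∧ l ≠ j
        · rw [pmap_eq i j k l k l ⟨hkl, hnij⟩
            (by simp only [swij]; split_ifs <;> omega)
            (by simp only [swij]; split_ifs <;> omega)]
        · rcases eq_or_ne k i with heq | hki
          · have heq2 : i = k := heq.symm
            subst heq2
            have hlj : l ≠ j := fun h => hnij ⟨rfl, h⟩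
            rcases lt_or_gt_of_ne hlj with hlt | hgt
            · rw [pmap_eq i j i l l j ⟨hkl, hnij⟩
                (by simp only [swij]; split_ifs <;> omega)
                (by simp only [swij]; split_ifs <;> omega)]
              simp only [hf]
              rw [if_pos hlt, if_pos hkl]
              exact (pair_caseB F hadd halt hkl hlt (by omega) hz).symm
            · rw [pmap_eq i j i l j l ⟨hkl, hnij⟩
                (by simp only [swij]; split_ifs <;> omega)
                (by simp only [swij]; split_ifs <;> omega)]
              simp only [hf]
              rw [if_pos hgt, if_pos hkl]
              exact (pair_caseC F hadd halt hij hgt (by omega) hz).symm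
          · rcases eq_or_ne k j with heq | hkj
            · have heq2 : j = k := heq.symm
              subst heq2
              rw [pmap_eq i j j l i l ⟨hkl, hnij⟩
                (by simp only [swij]; split_ifs <;> omega)
                (by simp only [swij]; split_ifs <;> omega)]
              simp only [hf]
              rw [if_pos (show i < l by omega), if_pos hkl]
              exact pair_caseC F hadd halt hij hkl (by omega) hz
            · rcases eq_or_ne l i with heq | hli
              · have heq2 : i = l := heq.symm
                subst heq2
                rw [pmap_eq i j k i k j ⟨hkl, hnij⟩
                  (by simp only [swij]; split_ifs <;> omega)
                  (by simp only [swij]; split_ifs <;> omega)]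
                simp only [hf]
                rw [if_pos (show k < j by omega), if_pos hkl]
                exact (pair_caseA F hadd halt hkl hij (by omega) hz).symm
              · have hlj : j = l := by tauto
                subst hlj
                rcases lt_or_gt_of_ne hki with hlt | hgt
                · rw [pmap_eq i j k j k i ⟨hkl, hnij⟩
                    (by simp only [swij]; split_ifs <;> omega)
                    (by simp only [swij]; split_ifs <;> omega)]
                  simp only [hf]
                  rw [if_pos hlt, if_pos hkl]
                  exact pair_caseA F hadd halt hlt hij (by omega) hz
                · rw [pmap_eq i j k j i k ⟨hkl, hnij⟩
                    (by simp only [swij]; split_ifs <;> omega)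
                    (by simp only [swij]; split_ifs <;> omega)]
                  simp only [hf]
                  rw [if_pos hgt, if_pos hkl]
                  exact pair_caseB F hadd halt hgt hkl (by omega) hz
      show f p + f (pmap i j p) = 0
      rw [key]
      exact char2_add_self F _
    · show f p + f (pmap i j p) = 0
      rw [show pmap i j p = p from by
        rcases p with ⟨k, l⟩; simp only [pmap]; rw [if_neg hcond]]
      exact char2_add_self F _

lemma double_sum_add {g : L → (ℕ → L) → M} {N R : ℕ} (hR : R ≤ N + 2)
    (g1 : 1 < R → ∀ (u : ℕ → L) (a b : L), g (a + b) u = g a u + g b u)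
    (hadd : ∀ a, Addl (g a) N)
    (v : ℕ → L) {p : ℕ} (hp : p < R) (a b : L) :
    (∑ k ∈ Finset.range R, ∑ l ∈ Finset.range R, if k < l then
        g ⁅Function.update v p (a + b) k, Function.update v p (a + b) l⁆
          (Function.update v p (a + b) ∘ hdel l ∘ hdel k) else 0)
    = (∑ k ∈ Finset.range R, ∑ l ∈ Finset.range R, if k < l then
        g ⁅Function.update v p a k, Function.update v p a l⁆
          (Function.update v p a ∘ hdel l ∘ hdel k) else 0)
      + ∑ k ∈ Finset.range R, ∑ l ∈ Finset.range R, if k < l then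
          g ⁅Function.update v p b k, Function.update v p b l⁆
            (Function.update v p b ∘ hdel l ∘ hdel k) else 0 := by
  rw [← Finset.sum_add_distrib]
  apply Finset.sum_congr rfl
  intro k hk
  rw [← Finset.sum_add_distrib]
  apply Finset.sum_congr rfl
  intro l hl
  simp only [Finset.mem_range] at hk hl
  by_cases hkl : k < l
  · simp only [if_pos hkl]
    have hg1 := g1 (by omega)
    by_cases hpk : k = p
    · subst hpk
      rw [Function.update_self, Function.update_self, Function.update_self,
          Function.update_of_ne (by omega : l ≠ k), Function.update_of_ne (by omega : l ≠ k),
          Function.update_of_ne (by omega : l ≠ k),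
          update_comp_hdel2_self_left v k l _ hkl, update_comp_hdel2_self_left v k l _ hkl,
          update_comp_hdel2_self_left v k l _ hkl, add_lie, hg1]
    · by_cases hpl : l = p
      · subst hpl
        rw [Function.update_self, Function.update_self, Function.update_self,
            Function.update_of_ne hpk, Function.update_of_ne hpk, Function.update_of_ne hpk,
            update_comp_hdel2_self_right v k l _ hkl, update_comp_hdel2_self_right v k l _ hkl,
            update_comp_hdel2_self_right v k l _ hkl, lie_add, hg1]
      · rw [Function.update_of_ne hpk, Function.update_of_ne hpk, Function.update_of_ne hpk,
            Function.update_of_ne hpl, Function.update_of_ne hpl, Function.update_of_ne hpl,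
            update_comp_hdel2 v k l p _ hkl (Ne.symm hpk) (Ne.symm hpl),
            update_comp_hdel2 v k l p _ hkl (Ne.symm hpk) (Ne.symm hpl),
            update_comp_hdel2 v k l p _ hkl (Ne.symm hpk) (Ne.symm hpl)]
        exact hadd _ _ _ a b (by split_ifs <;> omega)
  · simp only [if_neg hkl, add_zero]

lemma double_sum_smul (F : Type*) [Field F] [CharP F 2] [LieAlgebra F L] [Module F M]
    [LieModule F L M]
    {g : L → (ℕ → L) → M} {N R : ℕ} (hR : R ≤ N + 2)
    (g1 : 1 < R → ∀ (u : ℕ → L) (c : F) (a : L), g (c • a) u = c • g a u)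
    (hsml : ∀ (a : L) (w : ℕ → L) (q : ℕ) (c : F) (x : L), q < N →
      g a (Function.update w q (c • x)) = c • g a (Function.update w q x))
    (v : ℕ → L) {p : ℕ} (hp : p < R) (c : F) (a : L) :
    (∑ k ∈ Finset.range R, ∑ l ∈ Finset.range R, if k < l then
        g ⁅Function.update v p (c • a) k, Function.update v p (c • a) l⁆
          (Function.update v p (c • a) ∘ hdel l ∘ hdel k) else 0)
    = c • ∑ k ∈ Finset.range R, ∑ l ∈ Finset.range R, if k < l then
        g ⁅Function.update v p a k, Function.update v p a l⁆
          (Function.update v p a ∘ hdel l ∘ hdel k) else 0 := by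
  rw [Finset.smul_sum]
  apply Finset.sum_congr rfl
  intro k hk
  rw [Finset.smul_sum]
  apply Finset.sum_congr rfl
  intro l hl
  simp only [Finset.mem_range] at hk hl
  by_cases hkl : k < l
  · simp only [if_pos hkl]
    have hg1 := g1 (by omega)
    by_cases hpk : k = p
    · subst hpk
      rw [Function.update_self, Function.update_self,
          Function.update_of_ne (by omega : l ≠ k), Function.update_of_ne (by omega : l ≠ k),
          update_comp_hdel2_self_left v k l _ hkl, update_comp_hdel2_self_left v k l _ hkl,
          smul_lie, hg1]
    · by_cases hpl : l = p
      · subst hpl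
        rw [Function.update_self, Function.update_self,
            Function.update_of_ne hpk, Function.update_of_ne hpk,
            update_comp_hdel2_self_right v k l _ hkl, update_comp_hdel2_self_right v k l _ hkl,
            lie_smul, hg1]
      · rw [Function.update_of_ne hpk, Function.update_of_ne hpk,
            Function.update_of_ne hpl, Function.update_of_ne hpl,
            update_comp_hdel2 v k l p _ hkl (Ne.symm hpk) (Ne.symm hpl),
            update_comp_hdel2 v k l p _ hkl (Ne.symm hpk) (Ne.symm hpl)]
        exact hsml _ _ _ c a (by split_ifs <;> omega)
  · simp only [if_neg hkl, smul_zero]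

end DSums

section Lifts
variable {F L M : Type*} [Field F] [CharP F 2]
    [LieRing L] [LieAlgebra F L]
    [AddCommGroup M] [Module F M] [LieRingModule L M] [LieModule F L M]

lemma hprep0_add {g : (ℕ → L) → M} {N : ℕ} (hg : Addl g N) (h0 : 0 < N)
    (a b : L) (v : ℕ → L) :
    g (hprep (a + b) v) = g (hprep a v) + g (hprep b v) := by
  have h := hg (hprep a v) 0 a b h0
  rwa [update_hprep_zero, update_hprep_zero, update_hprep_zero] at h

lemma hprep0_smul {g : (ℕ → L) → M} {N : ℕ}
    (hs : ∀ (v : ℕ → L) (i : ℕ) (c : F) (a : L), i < N →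
      g (Function.update v i (c • a)) = c • g (Function.update v i a))
    (h0 : 0 < N) (c : F) (a : L) (v : ℕ → L) :
    g (hprep (c • a) v) = c • g (hprep a v) := by
  have h := hs (hprep a v) 0 c a h0
  rwa [update_hprep_zero, update_hprep_zero] at h

lemma hprep0_zero (F : Type*) [Field F] [CharP F 2] [Module F M]
    {g : (ℕ → L) → M} {N : ℕ} (hg : Addl g N) (h0 : 0 < N) (v : ℕ → L) :
    g (hprep 0 v) = 0 := by
  have h := Addl.zero_slot F hg (hprep (0 : L) v) h0
  rwa [update_hprep_zero] at h

lemma hprep1_add {g : (ℕ → L) → M} {N : ℕ} (hg : Addl g N) (h1 : 1 < N)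
    (b x y : L) (u : ℕ → L) :
    g (hprep b (hprep (x + y) u)) = g (hprep b (hprep x u)) + g (hprep b (hprep y u)) := by
  have e : ∀ w : L, hprep b (hprep w u) = Function.update (hprep b (hprep x u)) 1 w :=
    fun w => by rw [← update_hprep_zero u x w, hprep_update]
  rw [e (x + y), hg _ 1 x y h1, ← e x, ← e y]

lemma hprep1_smul {g : (ℕ → L) → M} {N : ℕ}
    (hs : ∀ (v : ℕ → L) (i : ℕ) (c : F) (a : L), i < N →
      g (Function.update v i (c • a)) = c • g (Function.update v i a))
    (h1 : 1 < N) (b : L) (c : F) (x : L) (u : ℕ → L) :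
    g (hprep b (hprep (c • x) u)) = c • g (hprep b (hprep x u)) := by
  have e : ∀ w : L, hprep b (hprep w u) = Function.update (hprep b (hprep x u)) 1 w :=
    fun w => by rw [← update_hprep_zero u x w, hprep_update]
  rw [e (c • x), hs _ 1 c x h1, ← e x]

lemma addl_hprep {g : (ℕ → L) → M} {N : ℕ} (hg : Addl g N) (a : L) :
    Addl (fun u => g (hprep a u)) (N - 1) := by
  intro v i x y h
  simp only
  rw [hprep_update, hprep_update, hprep_update]
  exact hg _ (i + 1) x y (by omega)

lemma altl_hprep {g : (ℕ → L) → M} {N : ℕ} (hg : Altl g N) (a : L) :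
    Altl (fun u => g (hprep a u)) (N - 1) := by
  intro v i j hi hj hne he
  apply hg _ (i + 1) (j + 1) (by omega) (by omega) (by omega)
  show hprep a v (i + 1) = hprep a v (j + 1)
  rw [hprep_succ, hprep_succ]
  exact he

lemma rot3 (F : Type*) [Field F] [CharP F 2] [Module F M]
    {g : (ℕ → L) → M} {N : ℕ} (hadd : Addl g N) (halt : Altl g N) (h2 : 2 < N)
    (b x y : L) (w : ℕ → L) :
    g (hprep x (hprep y (hprep b w))) = g (hprep b (hprep x (hprep y w))) := by
  set A := hprep x (hprep y (hprep b w)) with hA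
  set B := hprep x (hprep b (hprep y w)) with hB
  have e1 : Function.update (Function.update A 1 (A 2)) 2 (A 1) = B := by
    funext t
    simp only [hA, hB, hprep, Function.update_apply]
    split_ifs <;> first | rfl | (exfalso; first | omega | assumption) | (congr 1; omega)
  have e2 : Function.update (Function.update B 0 (B 1)) 1 (B 0) =
      hprep b (hprep x (hprep y w)) := by
    funext t
    simp only [hB, hprep, Function.update_apply]
    split_ifs <;> first | rfl | (exfalso; first | omega | assumption) | (congr 1; omega)
  have s1 : g B = g A := by
    rw [← e1]
    exact swap_eq F hadd halt A (by omega) h2 (by omega)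
  have s2 : g (hprep b (hprep x (hprep y w))) = g B := by
    rw [← e2]
    exact swap_eq F hadd halt B (by omega) (by omega) (by omega)
  rw [s2, s1]

end Lifts


set_option maxHeartbeats 2000000 in
/-- If `(φ, ω)` is a restricted `n`-cochain (`n ≥ 2`) of a restricted Lie
algebra `L` in characteristic 2 with values in a restricted module `M`, then
`(d^n_CE φ, δ^n ω)` is a restricted `(n+1)`-cochain; in particular
`δ^n ω (x+y, z) = δ^n ω (x, z) + δ^n ω (y, z) + d^n_CE φ (x, y, z)`. -/
theorem delta_of_restricted_cochain (F L M : Type*) [Field F] [CharP F 2]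
    [LieRing L] [LieAlgebra F L]
    [AddCommGroup M] [Module F M] [LieRingModule L M] [LieModule F L M]
    (sq : L → L)
    (h1 : ∀ (c : F) (x : L), sq (c • x) = c ^ 2 • sq x)
    (h2 : ∀ x y : L, ⁅x, sq y⁆ = ⁅⁅x, y⁆, y⁆)
    (h3 : ∀ x y : L, sq (x + y) = sq x + sq y + ⁅x, y⁆)
    (hres : ∀ (x : L) (m : M), ⁅sq x, m⁆ = ⁅x, ⁅x, m⁆⁆)
    (n : ℕ) (hn : 2 ≤ n) (φ : (ℕ → L) → M) (ω : L → (ℕ → L) → M)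
    (hc : IsRestrictedCochain2 F n φ ω) :
    IsRestrictedCochain2 F (n + 1) (dCE2 n φ) (delta2 sq n φ ω) ∧
      ∀ (x y : L) (z : ℕ → L),
        delta2 sq n φ ω (x + y) z =
          delta2 sq n φ ω x z + delta2 sq n φ ω y z + dCE2 n φ (hprep x (hprep y z)) := by
  obtain ⟨φadd, φsml, φalt, ωsq, ωadd, ωsml, ωalt, ωpol⟩ := hc
  obtain ⟨m, rfl⟩ : ∃ m, n = m + 2 := ⟨n - 2, by omega⟩
  have φAdd : Addl φ (m + 2) := fun v i a b h => φadd v i a b h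
  have φAlt : Altl φ (m + 2) := fun v i j hi hj hne he => φalt v i j hi hj hne he
  have ωAdd : ∀ x, Addl (ω x) m := fun x v i a b h => ωadd x v i a b h
  have ωAlt : ∀ x, Altl (ω x) m := fun x v i j hi hj hne he => ωalt x v i j hi hj hne he
  have hφ0 : (0 : ℕ) < m + 2 := by omega
  have hφ1 : (1 : ℕ) < m + 2 := by omega
  -- lifted structures
  have gφAdd : ∀ a : L, Addl (fun u => ⁅a, φ u⁆) (m + 2) := by
    intro a v i x' y' h
    simp only
    rw [φadd v i x' y' h, lie_add]
  have gφAlt : ∀ a : L, Altl (fun u => ⁅a, φ u⁆) (m + 2) := by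
    intro a v i j hi hj hne he
    simp only
    rw [φalt v i j hi hj hne he, lie_zero]
  have hpφAdd : ∀ a : L, Addl (fun u => φ (hprep a u)) (m + 1) := by
    intro a
    have := addl_hprep φAdd a
    simpa using this
  have hpφAlt : ∀ a : L, Altl (fun u => φ (hprep a u)) (m + 1) := by
    intro a
    have := altl_hprep φAlt a
    simpa using this
  have gωAdd : ∀ x a : L, Addl (fun u => ⁅a, ω x u⁆) m := by
    intro x a v i x' y' h
    simp only
    rw [ωadd x v i x' y' h, lie_add]
  have gωAlt : ∀ x a : L, Altl (fun u => ⁅a, ω x u⁆) m := by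
    intro x a v i j hi hj hne he
    simp only
    rw [ωalt x v i j hi hj hne he, lie_zero]
  have hpωAdd : ∀ (x a : L), Addl (fun u => ω x (hprep a u)) (m - 1) :=
    fun x a => addl_hprep (ωAdd x) a
  have hpωAlt : ∀ (x a : L), Altl (fun u => ω x (hprep a u)) (m - 1) :=
    fun x a => altl_hprep (ωAlt x) a
  -- the T4-style lift : u ↦ φ (hprep b (hprep x u))
  have t4Add : ∀ b x : L, Addl (fun u => φ (hprep b (hprep x u))) m := by
    intro b x v i x' y' h
    simp only
    rw [hprep_update, hprep_update, hprep_update, hprep_update, hprep_update, hprep_update]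
    exact φadd _ (i + 1 + 1) x' y' (by omega)
  have t4Alt : ∀ b x : L, Altl (fun u => φ (hprep b (hprep x u))) m := by
    intro b x v i j hi hj hne he
    simp only
    apply φalt _ (i + 1 + 1) (j + 1 + 1) (by omega) (by omega) (by omega)
    show hprep b (hprep x v) (i + 1 + 1) = hprep b (hprep x v) (j + 1 + 1)
    rw [hprep_succ, hprep_succ, hprep_succ, hprep_succ]
    exact he

  have key : ∀ (x y : L) (z : ℕ → L),
      delta2 sq (m + 2) φ ω (x + y) z =
        delta2 sq (m + 2) φ ω x z + delta2 sq (m + 2) φ ω y z +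
          dCE2 (m + 2) φ (hprep x (hprep y z)) := by
    intro x y z
    simp only [delta2, dCE2]
    rw [show m + 2 - 1 = m + 1 from rfl]
    have ecomp0 : hprep x (hprep y z) ∘ hdel 0 = hprep y z :=
      hprep_comp_hdel_zero (hprep y z) x
    have hpx1 : ∀ w : ℕ → L, hprep x (hprep y w) ∘ hdel 1 = hprep x w := by
      intro w
      show hprep x (hprep y w) ∘ hdel (0 + 1) = hprep x w
      rw [hprep_comp_hdel_succ, hprep_comp_hdel_zero]
    have ecomp1 : hprep x (hprep y z) ∘ hdel 1 = hprep x z := hpx1 z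
    have ecompk : ∀ k, hprep x (hprep y z) ∘ hdel (k + 1 + 1) =
        hprep x (hprep y (z ∘ hdel k)) := by
      intro k
      show hprep x (hprep y z) ∘ hdel ((k + 1) + 1) = _
      rw [hprep_comp_hdel_succ, hprep_comp_hdel_succ]
    have e10 : hprep x (hprep y z) ∘ hdel 1 ∘ hdel 0 = z := by
      rw [comp_comp, ecomp1, hprep_comp_hdel_zero]
    have el0 : ∀ l, hprep x (hprep y z) ∘ hdel (l + 1 + 1) ∘ hdel 0 =
        hprep y (z ∘ hdel l) := fun l => by
      rw [comp_comp, ecompk l, hprep_comp_hdel_zero]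
    have el1 : ∀ l, hprep x (hprep y z) ∘ hdel (l + 1 + 1) ∘ hdel 1 =
        hprep x (z ∘ hdel l) := fun l => by
      rw [comp_comp, ecompk l, hpx1]
    have elk : ∀ k l, hprep x (hprep y z) ∘ hdel (l + 1 + 1) ∘ hdel (k + 1 + 1) =
        hprep x (hprep y (z ∘ hdel l ∘ hdel k)) := fun k l => by
      rw [comp_comp, ecompk l]
      show hprep x (hprep y (z ∘ hdel l)) ∘ hdel ((k + 1) + 1) = _
      rw [hprep_comp_hdel_succ, hprep_comp_hdel_succ]
      rfl
    have S1 : (∑ k ∈ Finset.range (m + 2 + 1),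
        ⁅hprep x (hprep y z) k, φ (hprep x (hprep y z) ∘ hdel k)⁆) =
        ⁅x, φ (hprep y z)⁆ + ⁅y, φ (hprep x z)⁆ +
          ∑ k ∈ Finset.range (m + 1), ⁅z k, φ (hprep x (hprep y (z ∘ hdel k)))⁆ := by
      rw [Finset.sum_range_succ' _ (m + 2), Finset.sum_range_succ' _ (m + 1)]
      simp only [zero_add]
      rw [Finset.sum_congr rfl (fun k (hk : k ∈ Finset.range (m + 1)) => by
        rw [ecompk k, show hprep x (hprep y z) (k + 1 + 1) = z k from rfl])]
      rw [ecomp0, ecomp1, show hprep x (hprep y z) 0 = x from rfl,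
        show hprep x (hprep y z) 1 = y from rfl]
      abel
    have I0 : (∑ l ∈ Finset.range (m + 2 + 1), if 0 < l then
        φ (hprep ⁅hprep x (hprep y z) 0, hprep x (hprep y z) l⁆
          (hprep x (hprep y z) ∘ hdel l ∘ hdel 0)) else 0) =
        φ (hprep ⁅x, y⁆ z) +
          ∑ l ∈ Finset.range (m + 1), φ (hprep ⁅x, z l⁆ (hprep y (z ∘ hdel l))) := by
      rw [Finset.sum_range_succ' _ (m + 2), Finset.sum_range_succ' _ (m + 1)]
      simp only [zero_add]
      rw [Finset.sum_congr rfl (fun l (hl : l ∈ Finset.range (m + 1)) => by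
        rw [if_pos (by omega : (0 : ℕ) < l + 1 + 1), el0 l,
          show hprep x (hprep y z) (l + 1 + 1) = z l from rfl,
          show hprep x (hprep y z) 0 = x from rfl])]
      rw [if_pos (by omega : (0 : ℕ) < 1), if_neg (lt_irrefl 0), e10,
        show hprep x (hprep y z) 0 = x from rfl, show hprep x (hprep y z) 1 = y from rfl,
        add_zero]
      abel
    have I1 : (∑ l ∈ Finset.range (m + 2 + 1), if 1 < l then
        φ (hprep ⁅hprep x (hprep y z) 1, hprep x (hprep y z) l⁆
          (hprep x (hprep y z) ∘ hdel l ∘ hdel 1)) else 0) =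
        ∑ l ∈ Finset.range (m + 1), φ (hprep ⁅y, z l⁆ (hprep x (z ∘ hdel l))) := by
      rw [Finset.sum_range_succ' _ (m + 2), Finset.sum_range_succ' _ (m + 1)]
      simp only [zero_add]
      rw [Finset.sum_congr rfl (fun l (hl : l ∈ Finset.range (m + 1)) => by
        rw [if_pos (by omega : (1 : ℕ) < l + 1 + 1), el1 l,
          show hprep x (hprep y z) (l + 1 + 1) = z l from rfl,
          show hprep x (hprep y z) 1 = y from rfl])]
      rw [if_neg (lt_irrefl 1), if_neg (by omega : ¬ (1 : ℕ) < 0), add_zero, add_zero]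
    have IK : ∀ k, (∑ l ∈ Finset.range (m + 2 + 1), if k + 1 + 1 < l then
        φ (hprep ⁅hprep x (hprep y z) (k + 1 + 1), hprep x (hprep y z) l⁆
          (hprep x (hprep y z) ∘ hdel l ∘ hdel (k + 1 + 1))) else 0) =
        ∑ l ∈ Finset.range (m + 1), if k < l then
          φ (hprep ⁅z k, z l⁆ (hprep x (hprep y (z ∘ hdel l ∘ hdel k)))) else 0 := by
      intro k
      rw [Finset.sum_range_succ' _ (m + 2), Finset.sum_range_succ' _ (m + 1)]
      simp only [zero_add]
      rw [if_neg (by omega : ¬ k + 1 + 1 < 1), if_neg (by omega : ¬ k + 1 + 1 < 0),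
        add_zero, add_zero]
      refine Finset.sum_congr rfl fun l hl => ?_
      by_cases hkl : k < l
      · rw [if_pos (by omega : k + 1 + 1 < l + 1 + 1), if_pos hkl, elk k l,
          show hprep x (hprep y z) (k + 1 + 1) = z k from rfl,
          show hprep x (hprep y z) (l + 1 + 1) = z l from rfl]
      · rw [if_neg (by omega : ¬ k + 1 + 1 < l + 1 + 1), if_neg hkl]
    have S2 : (∑ k ∈ Finset.range (m + 2 + 1), ∑ l ∈ Finset.range (m + 2 + 1), if k < l then
        φ (hprep ⁅hprep x (hprep y z) k, hprep x (hprep y z) l⁆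
          (hprep x (hprep y z) ∘ hdel l ∘ hdel k)) else 0) =
        φ (hprep ⁅x, y⁆ z)
        + (∑ l ∈ Finset.range (m + 1), φ (hprep ⁅x, z l⁆ (hprep y (z ∘ hdel l))))
        + (∑ l ∈ Finset.range (m + 1), φ (hprep ⁅y, z l⁆ (hprep x (z ∘ hdel l))))
        + ∑ k ∈ Finset.range (m + 1), ∑ l ∈ Finset.range (m + 1), if k < l then
            φ (hprep ⁅z k, z l⁆ (hprep x (hprep y (z ∘ hdel l ∘ hdel k)))) else 0 := by
      rw [Finset.sum_range_succ' _ (m + 2), Finset.sum_range_succ' _ (m + 1)]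
      simp only [zero_add]
      rw [Finset.sum_congr rfl (fun k (hk : k ∈ Finset.range (m + 1)) => IK k), I0, I1]
      abel
    have E1 : ⁅x + y, φ (hprep (x + y) z)⁆ =
        ⁅x, φ (hprep x z)⁆ + ⁅x, φ (hprep y z)⁆ + ⁅y, φ (hprep x z)⁆ + ⁅y, φ (hprep y z)⁆ := by
      rw [hprep0_add φAdd hφ0, lie_add, add_lie, add_lie]
      abel
    have E2 : (∑ k ∈ Finset.range (m + 1), ⁅z k, ω (x + y) (z ∘ hdel k)⁆) =
        (∑ k ∈ Finset.range (m + 1), ⁅z k, ω x (z ∘ hdel k)⁆)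
        + (∑ k ∈ Finset.range (m + 1), ⁅z k, ω y (z ∘ hdel k)⁆)
        + ∑ k ∈ Finset.range (m + 1), ⁅z k, φ (hprep x (hprep y (z ∘ hdel k)))⁆ := by
      rw [← Finset.sum_add_distrib, ← Finset.sum_add_distrib]
      refine Finset.sum_congr rfl fun k _ => ?_
      rw [ωpol x y (z ∘ hdel k), lie_add, lie_add]
    have E3 : φ (hprep (sq (x + y)) z) =
        φ (hprep (sq x) z) + φ (hprep (sq y) z) + φ (hprep ⁅x, y⁆ z) := by
      rw [h3 x y, hprep0_add φAdd hφ0, hprep0_add φAdd hφ0]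
    have E4 : (∑ k ∈ Finset.range (m + 1),
        φ (hprep ⁅x + y, z k⁆ (hprep (x + y) (z ∘ hdel k)))) =
        (∑ k ∈ Finset.range (m + 1), φ (hprep ⁅x, z k⁆ (hprep x (z ∘ hdel k))))
        + (∑ k ∈ Finset.range (m + 1), φ (hprep ⁅x, z k⁆ (hprep y (z ∘ hdel k))))
        + (∑ k ∈ Finset.range (m + 1), φ (hprep ⁅y, z k⁆ (hprep x (z ∘ hdel k))))
        + ∑ k ∈ Finset.range (m + 1), φ (hprep ⁅y, z k⁆ (hprep y (z ∘ hdel k))) := by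
      rw [← Finset.sum_add_distrib, ← Finset.sum_add_distrib, ← Finset.sum_add_distrib]
      refine Finset.sum_congr rfl fun k _ => ?_
      rw [add_lie, hprep0_add φAdd hφ0, hprep1_add φAdd hφ1, hprep1_add φAdd hφ1]
      abel
    have E5 : (∑ k ∈ Finset.range (m + 1), ∑ l ∈ Finset.range (m + 1), if k < l then
        ω (x + y) (hprep ⁅z k, z l⁆ (z ∘ hdel l ∘ hdel k)) else 0) =
        (∑ k ∈ Finset.range (m + 1), ∑ l ∈ Finset.range (m + 1), if k < l then
          ω x (hprep ⁅z k, z l⁆ (z ∘ hdel l ∘ hdel k)) else 0)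
        + (∑ k ∈ Finset.range (m + 1), ∑ l ∈ Finset.range (m + 1), if k < l then
            ω y (hprep ⁅z k, z l⁆ (z ∘ hdel l ∘ hdel k)) else 0)
        + ∑ k ∈ Finset.range (m + 1), ∑ l ∈ Finset.range (m + 1), if k < l then
            φ (hprep ⁅z k, z l⁆ (hprep x (hprep y (z ∘ hdel l ∘ hdel k)))) else 0 := by
      rw [← Finset.sum_add_distrib, ← Finset.sum_add_distrib]
      refine Finset.sum_congr rfl fun k _ => ?_
      rw [← Finset.sum_add_distrib, ← Finset.sum_add_distrib]
      refine Finset.sum_congr rfl fun l hl => ?_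
      simp only [Finset.mem_range] at hl
      by_cases hkl : k < l
      · rw [if_pos hkl, if_pos hkl, if_pos hkl, if_pos hkl,
          ωpol x y (hprep ⁅z k, z l⁆ (z ∘ hdel l ∘ hdel k)),
          rot3 F φAdd φAlt (by omega : 2 < m + 2) ⁅z k, z l⁆ x y (z ∘ hdel l ∘ hdel k)]
      · rw [if_neg hkl, if_neg hkl, if_neg hkl, if_neg hkl, add_zero, add_zero]
    rw [E1, E2, E3, E4, E5, S1, S2]
    abel
  refine ⟨⟨?_, ?_, ?_, ?_, ?_, ?_, ?_, key⟩, key⟩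
  -- (1) additivity of dCE2
  · intro v p a b hp
    simp only [dCE2]
    have hA : (∑ k ∈ Finset.range (m + 2 + 1),
        ⁅Function.update v p (a + b) k, φ (Function.update v p (a + b) ∘ hdel k)⁆) =
        (∑ k ∈ Finset.range (m + 2 + 1),
          ⁅Function.update v p a k, φ (Function.update v p a ∘ hdel k)⁆)
        + ∑ k ∈ Finset.range (m + 2 + 1),
            ⁅Function.update v p b k, φ (Function.update v p b ∘ hdel k)⁆ :=
      single_sum_add (g := fun a u => ⁅a, φ u⁆) (by omega)
        (fun u a b => add_lie a b (φ u)) gφAdd v (by omega) a b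
    have hB : (∑ k ∈ Finset.range (m + 2 + 1), ∑ l ∈ Finset.range (m + 2 + 1),
        if k < l then φ (hprep ⁅Function.update v p (a + b) k, Function.update v p (a + b) l⁆
          (Function.update v p (a + b) ∘ hdel l ∘ hdel k)) else 0) =
        (∑ k ∈ Finset.range (m + 2 + 1), ∑ l ∈ Finset.range (m + 2 + 1),
          if k < l then φ (hprep ⁅Function.update v p a k, Function.update v p a l⁆
            (Function.update v p a ∘ hdel l ∘ hdel k)) else 0)
        + ∑ k ∈ Finset.range (m + 2 + 1), ∑ l ∈ Finset.range (m + 2 + 1),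
            if k < l then φ (hprep ⁅Function.update v p b k, Function.update v p b l⁆
              (Function.update v p b ∘ hdel l ∘ hdel k)) else 0 :=
      double_sum_add (g := fun a u => φ (hprep a u)) (N := m + 1) (by omega)
        (fun _ u a b => hprep0_add φAdd hφ0 a b u) hpφAdd v (by omega) a b
    rw [hA, hB]
    abel
  -- (2) scalars for dCE2
  · intro v p c a hp
    simp only [dCE2]
    have hA : (∑ k ∈ Finset.range (m + 2 + 1),
        ⁅Function.update v p (c • a) k, φ (Function.update v p (c • a) ∘ hdel k)⁆) =
        c • ∑ k ∈ Finset.range (m + 2 + 1),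
          ⁅Function.update v p a k, φ (Function.update v p a ∘ hdel k)⁆ :=
      single_sum_smul F (g := fun a u => ⁅a, φ u⁆) (N := m + 2) (by omega)
        (fun u c a => smul_lie c a (φ u))
        (fun a w i c b h => by rw [φsml w i c b h, lie_smul]) v (by omega) c a
    have hB : (∑ k ∈ Finset.range (m + 2 + 1), ∑ l ∈ Finset.range (m + 2 + 1),
        if k < l then φ (hprep ⁅Function.update v p (c • a) k, Function.update v p (c • a) l⁆
          (Function.update v p (c • a) ∘ hdel l ∘ hdel k)) else 0) =
        c • ∑ k ∈ Finset.range (m + 2 + 1), ∑ l ∈ Finset.range (m + 2 + 1),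
          if k < l then φ (hprep ⁅Function.update v p a k, Function.update v p a l⁆
            (Function.update v p a ∘ hdel l ∘ hdel k)) else 0 :=
      double_sum_smul F (g := fun a u => φ (hprep a u)) (N := m + 1) (by omega)
        (fun _ u c a => hprep0_smul φsml hφ0 c a u)
        (fun a w q c x h => by
          rw [hprep_update, hprep_update, φsml _ (q + 1) c x (by omega)]) v (by omega) c a
    rw [hA, hB, smul_add]
  -- (3) alternating for dCE2
  · intro v i j hi hj hne he
    have main : ∀ (i j : ℕ), i < j → j < m + 2 + 1 → v i = v j → dCE2 (m + 2) φ v = 0 := by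
      intro i j hij hj hz
      simp only [dCE2]
      have hA : (∑ k ∈ Finset.range (m + 2 + 1), ⁅v k, φ (v ∘ hdel k)⁆) = 0 :=
        single_sum_vanish F (N := m + 2) (by omega) gφAdd gφAlt hij hj hz
      have hB : (∑ k ∈ Finset.range (m + 2 + 1), ∑ l ∈ Finset.range (m + 2 + 1),
          if k < l then φ (hprep ⁅v k, v l⁆ (v ∘ hdel l ∘ hdel k)) else 0) = 0 :=
        double_sum_vanish F (N := m + 1) (by omega)
          (fun _ u => hprep0_zero F φAdd hφ0 u) hpφAdd hpφAlt hij hj hz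
      rw [hA, hB, add_zero]
    rcases Ne.lt_or_gt hne with h | h
    · exact main i j h (by omega) he
    · exact main j i h (by omega) he.symm
  -- (4) quadraticity of delta2 in x
  · intro c x z
    simp only [delta2]
    have e1 : ⁅c • x, φ (hprep (c • x) z)⁆ = c ^ 2 • ⁅x, φ (hprep x z)⁆ := by
      rw [hprep0_smul φsml hφ0 c x z, smul_lie, lie_smul, smul_smul, ← pow_two]
    have e2 : (∑ k ∈ Finset.range (m + 2 - 1), ⁅z k, ω (c • x) (z ∘ hdel k)⁆) =
        c ^ 2 • ∑ k ∈ Finset.range (m + 2 - 1), ⁅z k, ω x (z ∘ hdel k)⁆ := by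
      rw [Finset.smul_sum]
      exact Finset.sum_congr rfl fun k _ => by rw [ωsq c x, lie_smul]
    have e3 : φ (hprep (sq (c • x)) z) = c ^ 2 • φ (hprep (sq x) z) := by
      rw [h1 c x, hprep0_smul φsml hφ0 (c ^ 2) (sq x) z]
    have e4 : (∑ k ∈ Finset.range (m + 2 - 1),
        φ (hprep ⁅c • x, z k⁆ (hprep (c • x) (z ∘ hdel k)))) =
        c ^ 2 • ∑ k ∈ Finset.range (m + 2 - 1), φ (hprep ⁅x, z k⁆ (hprep x (z ∘ hdel k))) := by
      rw [Finset.smul_sum]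
      refine Finset.sum_congr rfl fun k _ => ?_
      rw [smul_lie, hprep0_smul φsml hφ0 c ⁅x, z k⁆ (hprep (c • x) (z ∘ hdel k)),
        hprep1_smul φsml hφ1 ⁅x, z k⁆ c x (z ∘ hdel k), smul_smul, ← pow_two]
    have e5 : (∑ k ∈ Finset.range (m + 2 - 1), ∑ l ∈ Finset.range (m + 2 - 1),
        if k < l then ω (c • x) (hprep ⁅z k, z l⁆ (z ∘ hdel l ∘ hdel k)) else 0) =
        c ^ 2 • ∑ k ∈ Finset.range (m + 2 - 1), ∑ l ∈ Finset.range (m + 2 - 1),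
          if k < l then ω x (hprep ⁅z k, z l⁆ (z ∘ hdel l ∘ hdel k)) else 0 := by
      rw [Finset.smul_sum]
      refine Finset.sum_congr rfl fun k _ => ?_
      rw [Finset.smul_sum]
      refine Finset.sum_congr rfl fun l _ => ?_
      by_cases hkl : k < l
      · rw [if_pos hkl, if_pos hkl, ωsq c x]
      · rw [if_neg hkl, if_neg hkl, smul_zero]
    rw [e1, e2, e3, e4, e5, ← smul_add, ← smul_add, ← smul_add, ← smul_add]
  -- (5) additivity of delta2 in the z's
  · intro x z p a b hp
    simp only [delta2]
    have eT : ∀ w : L, φ (hprep w (Function.update z p (a + b))) =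
        φ (hprep w (Function.update z p a)) + φ (hprep w (Function.update z p b)) := by
      intro w
      rw [hprep_update, hprep_update, hprep_update]
      exact φadd _ (p + 1) a b (by omega)
    have e2 : (∑ k ∈ Finset.range (m + 2 - 1),
        ⁅Function.update z p (a + b) k, ω x (Function.update z p (a + b) ∘ hdel k)⁆) =
        (∑ k ∈ Finset.range (m + 2 - 1),
          ⁅Function.update z p a k, ω x (Function.update z p a ∘ hdel k)⁆)
        + ∑ k ∈ Finset.range (m + 2 - 1),
            ⁅Function.update z p b k, ω x (Function.update z p b ∘ hdel k)⁆ :=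
      single_sum_add (g := fun a u => ⁅a, ω x u⁆) (N := m) (by omega)
        (fun u a b => add_lie a b (ω x u)) (gωAdd x) z (by omega) a b
    have e4 : (∑ k ∈ Finset.range (m + 2 - 1),
        φ (hprep ⁅x, Function.update z p (a + b) k⁆
          (hprep x (Function.update z p (a + b) ∘ hdel k)))) =
        (∑ k ∈ Finset.range (m + 2 - 1),
          φ (hprep ⁅x, Function.update z p a k⁆ (hprep x (Function.update z p a ∘ hdel k))))
        + ∑ k ∈ Finset.range (m + 2 - 1),
            φ (hprep ⁅x, Function.update z p b k⁆ (hprep x (Function.update z p b ∘ hdel k))) :=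
      single_sum_add (g := fun a u => φ (hprep ⁅x, a⁆ (hprep x u))) (N := m) (by omega)
        (fun u a b => by
          rw [lie_add, hprep0_add φAdd hφ0])
        (fun a => t4Add ⁅x, a⁆ x) z (by omega) a b
    have e5 : (∑ k ∈ Finset.range (m + 2 - 1), ∑ l ∈ Finset.range (m + 2 - 1),
        if k < l then ω x (hprep ⁅Function.update z p (a + b) k, Function.update z p (a + b) l⁆
          (Function.update z p (a + b) ∘ hdel l ∘ hdel k)) else 0) =
        (∑ k ∈ Finset.range (m + 2 - 1), ∑ l ∈ Finset.range (m + 2 - 1),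
          if k < l then ω x (hprep ⁅Function.update z p a k, Function.update z p a l⁆
            (Function.update z p a ∘ hdel l ∘ hdel k)) else 0)
        + ∑ k ∈ Finset.range (m + 2 - 1), ∑ l ∈ Finset.range (m + 2 - 1),
            if k < l then ω x (hprep ⁅Function.update z p b k, Function.update z p b l⁆
              (Function.update z p b ∘ hdel l ∘ hdel k)) else 0 :=
      double_sum_add (g := fun a u => ω x (hprep a u)) (N := m - 1) (by omega)
        (fun hRR u a b => hprep0_add (ωAdd x) (by omega) a b u) (hpωAdd x) z (by omega) a b
    rw [eT x, lie_add, eT (sq x), e2, e4, e5]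
    abel
  -- (6) scalars for delta2 in the z's
  · intro x z p c a hp
    simp only [delta2]
    have eT : ∀ w : L, φ (hprep w (Function.update z p (c • a))) =
        c • φ (hprep w (Function.update z p a)) := by
      intro w
      rw [hprep_update, hprep_update]
      exact φsml _ (p + 1) c a (by omega)
    have e2 : (∑ k ∈ Finset.range (m + 2 - 1),
        ⁅Function.update z p (c • a) k, ω x (Function.update z p (c • a) ∘ hdel k)⁆) =
        c • ∑ k ∈ Finset.range (m + 2 - 1),
          ⁅Function.update z p a k, ω x (Function.update z p a ∘ hdel k)⁆ :=
      single_sum_smul F (g := fun a u => ⁅a, ω x u⁆) (N := m) (by omega)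
        (fun u c a => smul_lie c a (ω x u))
        (fun a w i c b h => by rw [ωsml x w i c b h, lie_smul]) z (by omega) c a
    have e4 : (∑ k ∈ Finset.range (m + 2 - 1),
        φ (hprep ⁅x, Function.update z p (c • a) k⁆
          (hprep x (Function.update z p (c • a) ∘ hdel k)))) =
        c • ∑ k ∈ Finset.range (m + 2 - 1),
            φ (hprep ⁅x, Function.update z p a k⁆ (hprep x (Function.update z p a ∘ hdel k))) :=
      single_sum_smul F (g := fun a u => φ (hprep ⁅x, a⁆ (hprep x u))) (N := m) (by omega)
        (fun u c a => by
          rw [lie_smul, hprep0_smul φsml hφ0])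
        (fun a w q c b h => by
          rw [hprep_update, hprep_update, hprep_update, hprep_update,
            φsml _ (q + 1 + 1) c b (by omega)]) z (by omega) c a
    have e5 : (∑ k ∈ Finset.range (m + 2 - 1), ∑ l ∈ Finset.range (m + 2 - 1),
        if k < l then ω x (hprep ⁅Function.update z p (c • a) k, Function.update z p (c • a) l⁆
          (Function.update z p (c • a) ∘ hdel l ∘ hdel k)) else 0) =
        c • ∑ k ∈ Finset.range (m + 2 - 1), ∑ l ∈ Finset.range (m + 2 - 1),
            if k < l then ω x (hprep ⁅Function.update z p a k, Function.update z p a l⁆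
              (Function.update z p a ∘ hdel l ∘ hdel k)) else 0 :=
      double_sum_smul F (g := fun a u => ω x (hprep a u)) (N := m - 1) (by omega)
        (fun hRR u c a => hprep0_smul (ωsml x) (by omega) c a u)
        (fun a w q c b h => by
          rw [hprep_update, hprep_update, ωsml x _ (q + 1) c b (by omega)]) z (by omega) c a
    rw [eT x, lie_smul, eT (sq x), e2, e4, e5, ← smul_add, ← smul_add, ← smul_add, ← smul_add]
  -- (7) alternating for delta2 in the z's
  · intro x z i j hi hj hne he
    have main : ∀ (i j : ℕ), i < j → j < m + 2 - 1 → z i = z j →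
        delta2 sq (m + 2) φ ω x z = 0 := by
      intro i j hij hj hz
      simp only [delta2]
      have z1 : φ (hprep x z) = 0 :=
        φalt _ (i + 1) (j + 1) (by omega) (by omega) (by omega)
          (by rw [hprep_succ, hprep_succ]; exact hz)
      have z3 : φ (hprep (sq x) z) = 0 :=
        φalt _ (i + 1) (j + 1) (by omega) (by omega) (by omega)
          (by rw [hprep_succ, hprep_succ]; exact hz)
      have z2 : (∑ k ∈ Finset.range (m + 2 - 1), ⁅z k, ω x (z ∘ hdel k)⁆) = 0 :=
        single_sum_vanish F (N := m) (by omega) (gωAdd x) (gωAlt x) hij hj hz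
      have z4 : (∑ k ∈ Finset.range (m + 2 - 1),
          φ (hprep ⁅x, z k⁆ (hprep x (z ∘ hdel k)))) = 0 :=
        single_sum_vanish F (N := m) (by omega)
          (fun a => t4Add ⁅x, a⁆ x) (fun a => t4Alt ⁅x, a⁆ x) hij hj hz
      have z5 : (∑ k ∈ Finset.range (m + 2 - 1), ∑ l ∈ Finset.range (m + 2 - 1),
          if k < l then ω x (hprep ⁅z k, z l⁆ (z ∘ hdel l ∘ hdel k)) else 0) = 0 :=
        double_sum_vanish F (N := m - 1) (by omega)
          (fun hRR u => hprep0_zero F (ωAdd x) (by omega) u) (hpωAdd x) (hpωAlt x) hij hj hz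
      rw [z1, z2, z3, z4, z5, lie_zero]
      simp
    rcases Ne.lt_or_gt hne with h | h
    · exact main i j h (by omega) he
    · exact main j i h (by omega) he.symm
end

section
/- Let (h,θ) and (h,θ') be restricted Heisenberg algebras over a field of characteristic p ≥ 3. Then any Lie algebra isomorphism φ : h -> h is given by φ(x) = ax+by+cz, φ(y) = dx+ey+fz, φ(z) = (ae-bd)z with ae-bd ≠ 0; and φ is a restricted isomorphism (h,θ) -> (h,θ') if and only if, setting u = ae-bd, one has θ(x)u = a^p θ'(x) + b^p θ'(y) + c^p θ'(z), θ(y)u = d^p θ'(x) + e^p θ'(y) + f^p θ'(z), and θ(z)u = u^p θ'(z). -/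
/-- The `p`-map on the 3-dimensional Heisenberg algebra determined by a linear form
`θ`: `(a x + b y + c z)^{[p]} = (a^p θ(x) + b^p θ(y) + c^p θ(z)) z`. -/
noncomputable def heisPMap {F h : Type*} [Field F] [LieRing h] [LieAlgebra F h]
    (B : Module.Basis (Fin 3) F h) (p : ℕ) (θ : h →ₗ[F] F) : h → h :=
  fun v => (B.repr v 0 ^ p * θ (B 0) + B.repr v 1 ^ p * θ (B 1) + B.repr v 2 ^ p * θ (B 2)) • B 2

/-- Lie isomorphisms of the Heisenberg algebra (char `p ≥ 3`) have the
matrix form `φ(x) = ax+by+cz`, `φ(y) = dx+ey+fz`, `φ(z) = (ae-bd)z` with `ae-bd ≠ 0`,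
and such a `φ` is a restricted isomorphism `(h,θ) → (h,θ')` iff the stated equations
between `θ`, `θ'` and the coefficients hold. -/
theorem heisenberg_restricted_isomorphism_criterion (F h : Type*) (p : ℕ) [Field F]
    [Fact p.Prime] [CharP F p] (hp3 : 3 ≤ p)
    [LieRing h] [LieAlgebra F h] (B : Module.Basis (Fin 3) F h)
    (hxy : ⁅B 0, B 1⁆ = B 2) (hxz : ⁅B 0, B 2⁆ = 0) (hyz : ⁅B 1, B 2⁆ = 0)
    (θ θ' : h →ₗ[F] F)
    (φ : h ≃ₗ[F] h) (hφ : ∀ u v : h, φ ⁅u, v⁆ = ⁅φ u, φ v⁆) :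
    ∃ a b c d e f : F,
      a * e - b * d ≠ 0 ∧
      φ (B 0) = a • B 0 + b • B 1 + c • B 2 ∧
      φ (B 1) = d • B 0 + e • B 1 + f • B 2 ∧
      φ (B 2) = (a * e - b * d) • B 2 ∧
      ((∀ v : h, φ (heisPMap B p θ v) = heisPMap B p θ' (φ v)) ↔
        (θ (B 0) * (a * e - b * d) = a ^ p * θ' (B 0) + b ^ p * θ' (B 1) + c ^ p * θ' (B 2) ∧
         θ (B 1) * (a * e - b * d) = d ^ p * θ' (B 0) + e ^ p * θ' (B 1) + f ^ p * θ' (B 2) ∧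
         θ (B 2) * (a * e - b * d) = (a * e - b * d) ^ p * θ' (B 2))) := by
  classical
  have hp0 : p ≠ 0 := (Fact.out : p.Prime).ne_zero
  have hB2 : (B 2 : h) ≠ 0 := B.ne_zero 2
  obtain ⟨a, b, c, h0⟩ : ∃ a b c : F, φ (B 0) = a • B 0 + b • B 1 + c • B 2 := by
    refine ⟨B.repr (φ (B 0)) 0, B.repr (φ (B 0)) 1, B.repr (φ (B 0)) 2, ?_⟩
    have := B.sum_repr (φ (B 0))
    rw [Fin.sum_univ_three] at this
    exact this.symm
  obtain ⟨d, e, f, h1⟩ : ∃ d e f : F, φ (B 1) = d • B 0 + e • B 1 + f • B 2 := by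
    refine ⟨B.repr (φ (B 1)) 0, B.repr (φ (B 1)) 1, B.repr (φ (B 1)) 2, ?_⟩
    have := B.sum_repr (φ (B 1))
    rw [Fin.sum_univ_three] at this
    exact this.symm
  have hyx : ⁅B 1, B 0⁆ = -B 2 := by rw [← hxy, ← lie_skew]
  have hzx : ⁅B 2, B 0⁆ = 0 := by rw [← lie_skew, hxz, neg_zero]
  have hzy : ⁅B 2, B 1⁆ = 0 := by rw [← lie_skew, hyz, neg_zero]
  have h2 : φ (B 2) = (a * e - b * d) • B 2 := by
    rw [← hxy, hφ, h0, h1]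
    simp only [add_lie, lie_add, smul_lie, lie_smul, hxy, hxz, hyz, hyx, hzx, hzy, lie_self,
      smul_zero, smul_neg, zero_add, add_zero, smul_smul]
    module
  have hu : a * e - b * d ≠ 0 := by
    intro h'
    apply hB2
    have hz : φ (B 2) = φ 0 := by rw [h2, h', zero_smul, map_zero]
    simpa using φ.injective hz
  set u := a * e - b * d with hudef
  have hinj : ∀ r s : F, r • (B 2 : h) = s • B 2 → r = s := by
    intro r s hrs
    have : (r - s) • (B 2 : h) = 0 := by rw [sub_smul, hrs, sub_self]
    rcases smul_eq_zero.mp this with h' | h'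
    · exact sub_eq_zero.mp h'
    · exact absurd h' hB2
  have hpm : ∀ (ψ : h →ₗ[F] F) (r s t : F),
      heisPMap B p ψ (r • B 0 + s • B 1 + t • B 2)
        = (r ^ p * ψ (B 0) + s ^ p * ψ (B 1) + t ^ p * ψ (B 2)) • B 2 := by
    intro ψ r s t
    unfold heisPMap
    simp [Module.Basis.repr_self, Finsupp.single_apply, zero_pow hp0]
  have main : ∀ r s t : F,
      (φ (heisPMap B p θ (r • B 0 + s • B 1 + t • B 2))
        = heisPMap B p θ' (φ (r • B 0 + s • B 1 + t • B 2))) ↔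
      ((r ^ p * θ (B 0) + s ^ p * θ (B 1) + t ^ p * θ (B 2)) * u
        = (r * a + s * d) ^ p * θ' (B 0) + (r * b + s * e) ^ p * θ' (B 1)
          + (r * c + s * f + t * u) ^ p * θ' (B 2)) := by
    intro r s t
    have hφv : φ (r • B 0 + s • B 1 + t • B 2)
        = (r * a + s * d) • B 0 + (r * b + s * e) • B 1 + (r * c + s * f + t * u) • B 2 := by
      simp only [map_add, map_smul, h0, h1, h2]
      module
    rw [hpm, map_smul, h2, smul_smul, hφv, hpm]
    constructor
    · intro hh; exact hinj _ _ hh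
    · intro hh; rw [hh]
  have hcomb : ∀ v : h, v = B.repr v 0 • B 0 + B.repr v 1 • B 1 + B.repr v 2 • B 2 := by
    intro v
    have := B.sum_repr v
    rw [Fin.sum_univ_three] at this
    exact this.symm
  refine ⟨a, b, c, d, e, f, hu, h0, h1, h2, ?_⟩
  constructor
  · intro H
    have e1 := (main 1 0 0).mp (by
      have h' : (1:F) • B 0 + (0:F) • B 1 + (0:F) • B 2 = B 0 := by module
      rw [h']; exact H (B 0))
    have e2 := (main 0 1 0).mp (by
      have h' : (0:F) • B 0 + (1:F) • B 1 + (0:F) • B 2 = B 1 := by module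
      rw [h']; exact H (B 1))
    have e3 := (main 0 0 1).mp (by
      have h' : (0:F) • B 0 + (0:F) • B 1 + (1:F) • B 2 = B 2 := by module
      rw [h']; exact H (B 2))
    simp only [one_pow, zero_pow hp0, one_mul, zero_mul, mul_zero, add_zero, zero_add,
      mul_one] at e1 e2 e3
    exact ⟨e1, e2, e3⟩
  · rintro ⟨e1, e2, e3⟩ v
    rw [hcomb v]
    set r := B.repr v 0
    set s := B.repr v 1
    set t := B.repr v 2
    rw [main r s t]
    have f1 : (r * a + s * d) ^ p = r ^ p * a ^ p + s ^ p * d ^ p := by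
      rw [add_pow_char, mul_pow, mul_pow]
    have f2 : (r * b + s * e) ^ p = r ^ p * b ^ p + s ^ p * e ^ p := by
      rw [add_pow_char, mul_pow, mul_pow]
    have f3 : (r * c + s * f + t * u) ^ p
        = r ^ p * c ^ p + s ^ p * f ^ p + t ^ p * u ^ p := by
      rw [add_pow_char, add_pow_char, mul_pow, mul_pow, mul_pow]
    rw [f1, f2, f3]
    linear_combination r ^ p * e1 + s ^ p * e2 + t ^ p * e3
end

section
/- Let L, M be restricted Lie algebras in characteristic 2, φ : L -> M a restricted morphism, and (μ_t, ω_t), (ν_t, ε_t) formal restricted deformations of L and M respectively. If φ_t = Σ_{i≥0} t^i φ_i (with φ_0 = φ) is a restricted morphism from (L[[t]], μ_t, ω_t) to (M[[t]], ν_t, ε_t), then the first-order equation φ(ω_1(x)) + φ_1(x^{[2]_L}) = ε_1(φ(x)) + [φ(x), φ_1(x)]_M holds for all x ∈ L (together with the Lie-part equation φ∘μ_1(x,y) + ν_1(φ(x),φ(y)) + [φ_1(x),φ(y)] + [φ(x),φ_1(y)] + φ_1([x,y]) = 0), i.e. ((μ_1,ω_1),(ν_1,ε_1),φ_1) is a 2-cocycle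 of the morphism deformation complex. -/
/-- In characteristic 2, if `φ_t = Σ t^i φ_i` (with `φ_0 = φ`) is a
restricted morphism between formal restricted deformations `(μ_t, ω_t)` of `L` and
`(ν_t, ε_t)` of `M`, then the first-order equations hold:
`φ(ω₁(x)) + φ₁(x^{[2]}) = ε₁(φ(x)) + [φ(x), φ₁(x)]` and
`φ(μ₁(x,y)) + ν₁(φ(x),φ(y)) + [φ₁(x),φ(y)] + [φ(x),φ₁(y)] + φ₁([x,y]) = 0`,
i.e. `((μ₁,ω₁),(ν₁,ε₁),φ₁)` is a 2-cocycle of the morphism deformation complex. -/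
theorem morphism_deformation_infinitesimal_cocycle_char_two (F L M : Type*) [Field F]
    [CharP F 2] [LieRing L] [LieAlgebra F L] [LieRing M] [LieAlgebra F M]
    (sqL : L → L) (sqM : M → M)
    (hL1 : ∀ (c : F) (x : L), sqL (c • x) = c ^ 2 • sqL x)
    (hL2 : ∀ x y : L, ⁅x, sqL y⁆ = ⁅⁅x, y⁆, y⁆)
    (hL3 : ∀ x y : L, sqL (x + y) = sqL x + sqL y + ⁅x, y⁆)
    (hM1 : ∀ (c : F) (a : M), sqM (c • a) = c ^ 2 • sqM a)
    (hM2 : ∀ a b : M, ⁅a, sqM b⁆ = ⁅⁅a, b⁆, b⁆)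
    (hM3 : ∀ a b : M, sqM (a + b) = sqM a + sqM b + ⁅a, b⁆)
    -- `φ` is a restricted morphism
    (φ : L →ₗ[F] M)
    (hφbr : ∀ x y : L, φ ⁅x, y⁆ = ⁅φ x, φ y⁆)
    (hφsq : ∀ x : L, φ (sqL x) = sqM (φ x))
    -- a formal restricted deformation `(μ_t, ω_t)` of `L`, coefficientwise
    (μ : ℕ → L → L → L) (w : ℕ → L → L)
    (hμ0 : ∀ x y : L, μ 0 x y = ⁅x, y⁆) (hw0 : ∀ x : L, w 0 x = sqL x)
    (hμanti : ∀ (i : ℕ) (x y : L), μ i x y = -μ i y x)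
    (hwq : ∀ (i : ℕ) (c : F) (x : L), w i (c • x) = c ^ 2 • w i x)
    (hLjacobi : ∀ (n : ℕ) (x y z : L),
      ∑ q ∈ Finset.HasAntidiagonal.antidiagonal n,
        (μ q.1 x (μ q.2 y z) + μ q.1 y (μ q.2 z x) + μ q.1 z (μ q.2 x y)) = 0)
    (hLcompat : ∀ (n : ℕ) (x y : L),
      ∑ q ∈ Finset.HasAntidiagonal.antidiagonal n, μ q.1 x (w q.2 y) =
        ∑ q ∈ Finset.HasAntidiagonal.antidiagonal n, μ q.1 (μ q.2 x y) y)
    (hLadd : ∀ (n : ℕ) (x y : L), w n (x + y) = w n x + w n y + μ n x y)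
    -- a formal restricted deformation `(ν_t, ε_t)` of `M`, coefficientwise
    (ν : ℕ → M → M → M) (ε : ℕ → M → M)
    (hν0 : ∀ a b : M, ν 0 a b = ⁅a, b⁆) (hε0 : ∀ a : M, ε 0 a = sqM a)
    (hνanti : ∀ (i : ℕ) (a b : M), ν i a b = -ν i b a)
    (hεq : ∀ (i : ℕ) (c : F) (a : M), ε i (c • a) = c ^ 2 • ε i a)
    (hMjacobi : ∀ (n : ℕ) (a b c : M),
      ∑ q ∈ Finset.HasAntidiagonal.antidiagonal n,
        (ν q.1 a (ν q.2 b c) + ν q.1 b (ν q.2 c a) + ν q.1 c (ν q.2 a b)) = 0)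
    (hMcompat : ∀ (n : ℕ) (a b : M),
      ∑ q ∈ Finset.HasAntidiagonal.antidiagonal n, ν q.1 a (ε q.2 b) =
        ∑ q ∈ Finset.HasAntidiagonal.antidiagonal n, ν q.1 (ν q.2 a b) b)
    (hMadd : ∀ (n : ℕ) (a b : M), ε n (a + b) = ε n a + ε n b + ν n a b)
    -- a restricted deformation `φ_t = Σ t^i φ_i` of the morphism `φ`
    (φseq : ℕ → (L →ₗ[F] M)) (hφ0 : φseq 0 = φ)
    -- coefficientwise form of `φ_t ∘ μ_t = ν_t(φ_t, φ_t)`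
    (heq1 : ∀ (n : ℕ) (x y : L),
      ∑ q ∈ Finset.HasAntidiagonal.antidiagonal n, φseq q.1 (μ q.2 x y) =
        ∑ i ∈ Finset.range (n + 1), ∑ j ∈ Finset.range (n + 1), ∑ k ∈ Finset.range (n + 1),
          if i + j + k = n then ν k (φseq i x) (φseq j y) else 0)
    -- coefficientwise form of `φ_t ∘ ω_t = ε_t ∘ φ_t`
    (heq2 : ∀ (n : ℕ) (x : L),
      ∑ q ∈ Finset.HasAntidiagonal.antidiagonal n, φseq q.1 (w q.2 x) =
        (∑ j ∈ Finset.range (n + 1), if 2 * j ≤ n then ε (n - 2 * j) (φseq j x) else 0) +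
          ∑ i ∈ Finset.range (n + 1), ∑ j ∈ Finset.range (n + 1), ∑ k ∈ Finset.range (n + 1),
            if i + j + k = n ∧ j < k then ν i (φseq j x) (φseq k x) else 0) :
    (∀ x : L, φ (w 1 x) + φseq 1 (sqL x) = ε 1 (φ x) + ⁅φ x, φseq 1 x⁆) ∧
    (∀ x y : L,
      φ (μ 1 x y) + ν 1 (φ x) (φ y) + ⁅φseq 1 x, φ y⁆ + ⁅φ x, φseq 1 y⁆ + φseq 1 ⁅x, y⁆ = 0) := by
  have htwo : ∀ a : M, a + a = 0 := by
    intro a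
    have : (2 : F) • a = a + a := two_smul F a
    rw [show (2:F) = 0 from by exact_mod_cast (CharP.cast_eq_zero F 2), zero_smul] at this
    exact this.symm
  have h1 := fun x => heq2 1 x
  have h2 := fun x y => heq1 1 x y
  simp only [Finset.Nat.sum_antidiagonal_eq_sum_range_succ_mk, Finset.sum_range_succ,
    Finset.sum_range_zero, hφ0, hμ0, hw0, hν0, hε0, zero_add, add_zero,
    Nat.sub_zero] at h1 h2
  norm_num at h1 h2
  constructor
  · intro x
    have := h1 x
    linear_combination (norm := abel) this
  · intro x y
    have := h2 x y
    have goal : φ (μ 1 x y) + ν 1 (φ x) (φ y) + ⁅φseq 1 x, φ y⁆ + ⁅φ x, φseq 1 y⁆ + φseq 1 ⁅x, y⁆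
        = (φ (μ 1 x y) + φseq 1 ⁅x, y⁆) + (ν 1 (φ x) (φ y) + ⁅φseq 1 x, φ y⁆ + ⁅φ x, φseq 1 y⁆) := by
      abel
    rw [goal, this]
    have h3 := htwo (ν 1 (φ x) (φ y) + ⁅φ x, φseq 1 y⁆ + ⁅φseq 1 x, φ y⁆)
    linear_combination (norm := abel) h3
end

section
/- Let L be a restricted Lie algebra in characteristic 2 and (m_t, ω_t) a formal restricted deformation of L. Then its infinitesimal (m_1, ω_1) is a restricted 2-cocycle: m_1 satisfies the Chevalley–Eilenberg 2-cocycle identity, ω_1(λx) = λ^2 ω_1(x), ω_1(x+y) = ω_1(x)+ω_1(y)+m_1(x,y), and m_1(x, y^{[2]}) + [x, ω_1(y)] + [m_1(x,y), y] + m_1([x,y], y) = 0 for all x,y ∈ L. -/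
/-- In characteristic 2, the infinitesimal `(m₁, ω₁)` of a formal
restricted deformation `(m_t, ω_t)` of a restricted Lie algebra is a restricted
2-cocycle: `m₁` satisfies the Chevalley–Eilenberg 2-cocycle identity,
`ω₁(λx) = λ²ω₁(x)`, `ω₁(x+y) = ω₁(x)+ω₁(y)+m₁(x,y)`, and
`m₁(x, y^{[2]}) + [x, ω₁(y)] + [m₁(x,y), y] + m₁([x,y], y) = 0`. -/
theorem infinitesimal_is_restricted_two_cocycle_char_two (F L : Type*) [Field F]
    [CharP F 2] [LieRing L] [LieAlgebra F L]
    (sq : L → L)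
    (h1 : ∀ (c : F) (x : L), sq (c • x) = c ^ 2 • sq x)
    (h2 : ∀ x y : L, ⁅x, sq y⁆ = ⁅⁅x, y⁆, y⁆)
    (h3 : ∀ x y : L, sq (x + y) = sq x + sq y + ⁅x, y⁆)
    -- the coefficients of the deformation
    (m : ℕ → L → L → L) (w : ℕ → L → L)
    (hm0 : ∀ x y : L, m 0 x y = ⁅x, y⁆)
    (hw0 : ∀ x : L, w 0 x = sq x)
    -- each `m_i` is bilinear and antisymmetric, each `ω_i` is quadratic-homogeneous
    (hmadd₁ : ∀ (i : ℕ) (x x' y : L), m i (x + x') y = m i x y + m i x' y)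
    (hmsmul₁ : ∀ (i : ℕ) (c : F) (x y : L), m i (c • x) y = c • m i x y)
    (hmadd₂ : ∀ (i : ℕ) (x y y' : L), m i x (y + y') = m i x y + m i x y')
    (hmsmul₂ : ∀ (i : ℕ) (c : F) (x y : L), m i x (c • y) = c • m i x y)
    (hmanti : ∀ (i : ℕ) (x y : L), m i x y = -m i y x)
    (hwq : ∀ (i : ℕ) (c : F) (x : L), w i (c • x) = c ^ 2 • w i x)
    -- the deformation equations, coefficientwise in `t`
    (hjacobi : ∀ (n : ℕ) (x y z : L),
      ∑ q ∈ Finset.HasAntidiagonal.antidiagonal n,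
        (m q.1 x (m q.2 y z) + m q.1 y (m q.2 z x) + m q.1 z (m q.2 x y)) = 0)
    (hcompat : ∀ (n : ℕ) (x y : L),
      ∑ q ∈ Finset.HasAntidiagonal.antidiagonal n, m q.1 x (w q.2 y) =
        ∑ q ∈ Finset.HasAntidiagonal.antidiagonal n, m q.1 (m q.2 x y) y)
    (haddeq : ∀ (n : ℕ) (x y : L), w n (x + y) = w n x + w n y + m n x y) :
    (∀ x y z : L,
      ⁅x, m 1 y z⁆ + ⁅y, m 1 z x⁆ + ⁅z, m 1 x y⁆ +
        m 1 x ⁅y, z⁆ + m 1 y ⁅z, x⁆ + m 1 z ⁅x, y⁆ = 0) ∧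
    (∀ (c : F) (x : L), w 1 (c • x) = c ^ 2 • w 1 x) ∧
    (∀ x y : L, w 1 (x + y) = w 1 x + w 1 y + m 1 x y) ∧
    (∀ x y : L, m 1 x (sq y) + ⁅x, w 1 y⁆ + ⁅m 1 x y, y⁆ + m 1 ⁅x, y⁆ y = 0) := by
  have hs : ∀ f : ℕ×ℕ → L, ∑ q ∈ Finset.HasAntidiagonal.antidiagonal 1, f q = f (0,1) + f (1,0) := by
    intro f
    rw [show Finset.HasAntidiagonal.antidiagonal 1 = {((0:ℕ),(1:ℕ)), (1,0)} from rfl,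
      Finset.sum_pair (by decide)]
  have hch : ∀ a : L, a + a = 0 := by
    intro a
    have h2 : ((2:F)) = 0 := by
      have := CharP.cast_eq_zero F 2; exact_mod_cast this
    rw [← two_smul F a, h2, zero_smul]
  refine ⟨?_, fun c x => hwq 1 c x, fun x y => haddeq 1 x y, ?_⟩
  · intro x y z
    have h := hjacobi 1 x y z
    rw [hs] at h
    simp only [hm0] at h
    rw [← h]; abel
  · intro x y
    have h := hcompat 1 x y
    rw [hs, hs] at h
    simp only [hm0, hw0] at h
    rw [show m 1 x (sq y) + ⁅x, w 1 y⁆ + ⁅m 1 x y, y⁆ + m 1 ⁅x, y⁆ y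
          = (⁅x, w 1 y⁆ + m 1 x (sq y)) + (⁅m 1 x y, y⁆ + m 1 ⁅x, y⁆ y) by abel,
        h]
    exact hch _
end
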